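/- arXiv:1807.00034 — 6 statements merged into one kernel-verified Lean document; each statement's English description precedes it below -/
import Mathlib

section
/- Let 0 < α < β. Then for every n ≥ 1 the exceptional zero x̂_{n,n}^{(α,β)} of the X₁-Jacobi polynomial P̂_n^{(α,β)} satisfies b < x̂_{n,n}^{(α,β)} ≤ ((2n+α+β)/(2n−2+α+β))·b. -/
open Finset Filter

/-- The Jacobi polynomial `P_n^{(α,β)}(x)` via its explicit sum representation. -/
noncomputable def jacobiP (α β : ℝ) (n : ℕ) (x : ℝ) : ℝ :=
  ∑ s ∈ Finset.range (n + 1),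
    ((∏ j ∈ Finset.Icc (s + 1) n, (α + (j : ℝ))) / (Nat.factorial (n - s) : ℝ)) *
      ((∏ j ∈ Finset.Icc (n - s + 1) n, (β + (j : ℝ))) / (Nat.factorial s : ℝ)) *
      ((x - 1) / 2) ^ s * ((x + 1) / 2) ^ (n - s)

/-- The X₁-Jacobi polynomial `P̂_n^{(α,β)}(x)` for `n ≥ 1`, with `b = (β+α)/(β-α)`. -/
noncomputable def X1jacobiP (α β : ℝ) (n : ℕ) (x : ℝ) : ℝ :=
  -(1 / 2) * (x - (β + α) / (β - α)) * jacobiP α β (n - 1) x +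
    ((β + α) / (β - α) * jacobiP α β (n - 1) x -
        (if 2 ≤ n then jacobiP α β (n - 2) x else 0)) / (2 * (n : ℝ) - 2 + α + β)

/-- The generalized Laguerre polynomial `L_n^{(α)}(x)` via its explicit sum representation. -/
noncomputable def laguerreL (α : ℝ) (n : ℕ) (x : ℝ) : ℝ :=
  ∑ k ∈ Finset.range (n + 1),
    (-1 : ℝ) ^ k / (Nat.factorial k : ℝ) *
      ((∏ j ∈ Finset.Icc (k + 1) n, (α + (j : ℝ))) / (Nat.factorial (n - k) : ℝ)) * x ^ k

/-- The X₁-Laguerre polynomial `L̂_n^{(α)}(x)` for `n ≥ 1`. -/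
noncomputable def X1laguerreL (α : ℝ) (n : ℕ) (x : ℝ) : ℝ :=
  -(x + α + 1) * laguerreL α (n - 1) x + (if 2 ≤ n then laguerreL α (n - 2) x else 0)

/-- The physicist's Hermite polynomial `H_m(x)`. -/
noncomputable def hermiteH (m : ℕ) (x : ℝ) : ℝ :=
  (Nat.factorial m : ℝ) *
    ∑ j ∈ Finset.range (m / 2 + 1),
      (-1 : ℝ) ^ j / ((Nat.factorial j : ℝ) * (Nat.factorial (m - 2 * j) : ℝ)) *
        (2 * x) ^ (m - 2 * j)

/-- `z 1 < z 2 < … < z n` enumerates, in increasing order, all real zeros of `f`. -/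
def EnumZeros (f : ℝ → ℝ) (n : ℕ) (z : ℕ → ℝ) : Prop :=
  StrictMonoOn z (Set.Icc 1 n) ∧ ∀ x : ℝ, f x = 0 ↔ ∃ k, 1 ≤ k ∧ k ≤ n ∧ x = z k

lemma jacobiP_pos (α β : ℝ) (hα : 0 < α) (hβ : 0 < β) (n : ℕ) (x : ℝ) (hx : 1 < x) :
    0 < jacobiP α β n x := by
  unfold jacobiP
  apply Finset.sum_pos
  · intro s _
    have h1 : (0:ℝ) < (x - 1) / 2 := by linarith
    have h2 : (0:ℝ) < (x + 1) / 2 := by linarith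
    apply mul_pos (mul_pos (mul_pos _ _) (pow_pos h1 _)) (pow_pos h2 _)
    · exact div_pos (Finset.prod_pos fun j _ => by positivity) (by positivity)
    · exact div_pos (Finset.prod_pos fun j _ => by positivity) (by positivity)
  · exact Finset.nonempty_range_iff.mpr (Nat.succ_ne_zero n)

lemma jacobiP_zero (α β : ℝ) (x : ℝ) : jacobiP α β 0 x = 1 := by
  simp [jacobiP]

lemma jacobiP_continuous (α β : ℝ) (n : ℕ) : Continuous (jacobiP α β n) := by
  unfold jacobiP
  apply continuous_finset_sum
  intro s _
  fun_prop

lemma jacobiP_le_succ (α β : ℝ) (hα : 0 < α) (hβ : 0 < β) (m : ℕ) (x : ℝ) (hx : 1 ≤ x) :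
    jacobiP α β m x ≤ jacobiP α β (m + 1) x := by
  have hu : (0:ℝ) ≤ (x - 1) / 2 := by linarith
  have hv : (1:ℝ) ≤ (x + 1) / 2 := by linarith
  have hv0 : (0:ℝ) ≤ (x + 1) / 2 := by linarith
  unfold jacobiP
  conv_rhs => rw [Finset.sum_range_succ]
  apply le_add_of_le_of_nonneg
  · apply Finset.sum_le_sum
    intro s hs
    have hsm : s ≤ m := Nat.lt_succ_iff.mp (Finset.mem_range.mp hs)
    obtain ⟨t, rfl⟩ := Nat.exists_eq_add_of_le hsm
    have h1 : s + t - s = t := by omega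
    have h2 : s + t + 1 - s = t + 1 := by omega
    rw [h1, h2]
    have h4 : t + 1 + 1 = t + 2 := rfl
    rw [h4]
    -- product splits
    have hA : (∏ j ∈ Finset.Icc (s + 1) (s + t + 1), (α + (j : ℝ)))
        = (∏ j ∈ Finset.Icc (s + 1) (s + t), (α + (j : ℝ))) * (α + (s + t + 1 : ℕ)) :=
      Finset.prod_Icc_succ_top (by omega) _
    have hB : (∏ j ∈ Finset.Icc (t + 1) (s + t + 1), (β + (j : ℝ)))
        = (∏ j ∈ Finset.Icc (t + 1) (s + t), (β + (j : ℝ))) * (β + (s + t + 1 : ℕ)) :=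
      Finset.prod_Icc_succ_top (by omega) _
    have hB2 : (∏ j ∈ Finset.Icc (t + 1) (s + t + 1), (β + (j : ℝ)))
        = (β + (t + 1 : ℕ)) * ∏ j ∈ Finset.Icc (t + 2) (s + t + 1), (β + (j : ℝ)) := by
      rw [show Finset.Icc (t+1) (s+t+1) = Finset.Ico (t+1) (s+t+2) by rw [← Finset.Ico_add_one_right_eq_Icc]; rfl,
          show Finset.Icc (t+2) (s+t+1) = Finset.Ico (t+2) (s+t+2) by rw [← Finset.Ico_add_one_right_eq_Icc]; rfl]
      exact Finset.prod_eq_prod_Ico_succ_bot (by omega) _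
    set Pa := ∏ j ∈ Finset.Icc (s + 1) (s + t), (α + (j : ℝ)) with hPa
    set Pb := ∏ j ∈ Finset.Icc (t + 1) (s + t), (β + (j : ℝ)) with hPb
    set Pb2 := ∏ j ∈ Finset.Icc (t + 2) (s + t + 1), (β + (j : ℝ)) with hPb2
    have hPa0 : 0 ≤ Pa := Finset.prod_nonneg fun j _ => by positivity
    have hPb0 : 0 ≤ Pb := Finset.prod_nonneg fun j _ => by positivity
    have hPb20 : 0 ≤ Pb2 := Finset.prod_nonneg fun j _ => by positivity
    have hBB : (β + (t + 1 : ℕ)) * Pb2 = Pb * (β + (s + t + 1 : ℕ)) := by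
      rw [← hB2, hB]
    -- Pb ≤ Pb2
    have hPble : Pb ≤ Pb2 := by
      have ht1 : (0:ℝ) < β + (t + 1 : ℕ) := by positivity
      rw [← mul_le_mul_iff_right₀ ht1, hBB]
      push_cast
      nlinarith [mul_nonneg hPb0 (le_of_lt hα)]
    -- A part
    have hAle : Pa / (Nat.factorial t : ℝ) ≤
        Pa * (α + (s + t + 1 : ℕ)) / (Nat.factorial (t + 1) : ℝ) := by
      rw [Nat.factorial_succ]
      push_cast
      rw [div_le_div_iff₀ (by positivity) (by positivity)]
      have : (t:ℝ) + 1 ≤ α + ((s:ℝ) + t + 1) := by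
        have hs0 : (0:ℝ) ≤ (s:ℝ) := Nat.cast_nonneg s
        linarith
      nlinarith [(show (0:ℝ) < (Nat.factorial t : ℝ) from Nat.cast_pos.mpr (Nat.factorial_pos t)), mul_nonneg hPa0 (show (0:ℝ) ≤ (Nat.factorial t : ℝ) from Nat.cast_nonneg _)]
    rw [hA]
    have hvpow : ((x + 1) / 2) ^ t ≤ ((x + 1) / 2) ^ (t + 1) :=
      pow_le_pow_right₀ hv (by omega)
    calc Pa / (Nat.factorial t : ℝ) * (Pb / (Nat.factorial s : ℝ)) * ((x - 1) / 2) ^ s *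
          ((x + 1) / 2) ^ t
        ≤ Pa * (α + (s + t + 1 : ℕ)) / (Nat.factorial (t + 1) : ℝ) *
          (Pb2 / (Nat.factorial s : ℝ)) * ((x - 1) / 2) ^ s * ((x + 1) / 2) ^ (t + 1) := by
          apply mul_le_mul
          · apply mul_le_mul
            · apply mul_le_mul hAle (div_le_div_of_nonneg_right hPble (by positivity)) (by positivity) (by positivity)
            · exact le_refl _
            · positivity
            · positivity
          · exact hvpow
          · positivity
          · positivity
        _ = _ := by ring
  · apply mul_nonneg (mul_nonneg (mul_nonneg _ _) (by positivity)) (by positivity)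
    · exact div_nonneg (Finset.prod_nonneg fun j _ => by positivity) (by positivity)
    · exact div_nonneg (Finset.prod_nonneg fun j _ => by positivity) (by positivity)


/-- For `0 < α < β` and `n ≥ 1`, the exceptional zero of the X₁-Jacobi
polynomial satisfies `b < x̂_{n,n} ≤ ((2n+α+β)/(2n-2+α+β))·b`. -/
theorem X1jacobi_exceptional_zero_bounds
    (α β : ℝ) (hα : 0 < α) (hαβ : α < β)
    (b : ℝ) (hb : b = (β + α) / (β - α))
    (z : ℕ → ℕ → ℝ)
    (hz : ∀ n : ℕ, 1 ≤ n → EnumZeros (X1jacobiP α β n) n (z n)) :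
    ∀ n : ℕ, 1 ≤ n →
      b < z n n ∧ z n n ≤ (2 * (n : ℝ) + α + β) / (2 * (n : ℝ) - 2 + α + β) * b := by
  have hβ : 0 < β := lt_trans hα hαβ
  have hba : 0 < β - α := by linarith
  have hb1 : 1 < b := by
    rw [hb, lt_div_iff₀ hba]; linarith
  have hb0 : 0 < b := lt_trans one_pos hb1
  intro n hn
  obtain ⟨hmono, hiff⟩ := hz n hn
  have hn1 : (1:ℝ) ≤ (n:ℝ) := by exact_mod_cast hn
  have hK : 0 < 2 * (n:ℝ) - 2 + α + β := by linarith
  set K := 2 * (n:ℝ) - 2 + α + β with hKdef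
  set xs := (2 * (n : ℝ) + α + β) / K * b with hxs
  have hxsb : xs = b + 2 * b / K := by
    rw [hxs]; field_simp; ring
  have hxsgt : b < xs := by
    rw [hxsb]
    have : 0 < 2 * b / K := by positivity
    linarith
  clear_value K
  have hfx : ∀ x, X1jacobiP α β n x =
      -(1 / 2) * (x - b) * jacobiP α β (n - 1) x +
        (b * jacobiP α β (n - 1) x -
          (if 2 ≤ n then jacobiP α β (n - 2) x else 0)) / K := by
    intro x; rw [X1jacobiP, hb, hKdef]
  -- there is a zero y with b < y ≤ xs
  have hexists : ∃ y, b < y ∧ y ≤ xs ∧ X1jacobiP α β n y = 0 := by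
    rcases Nat.lt_or_ge n 2 with h2 | h2
    · -- n = 1
      have hn1' : n = 1 := by omega
      subst hn1'
      refine ⟨xs, hxsgt, le_refl _, ?_⟩
      rw [hfx]
      simp only [show (1:ℕ) - 1 = 0 from rfl, jacobiP_zero]
      rw [if_neg (by omega)]
      rw [hxsb]
      field_simp
      ring
    · -- n ≥ 2
      have hfb : 0 < X1jacobiP α β n b := by
        rw [hfx]
        rw [if_pos h2]
        have hP1 : 0 < jacobiP α β (n-1) b := jacobiP_pos α β hα hβ _ b hb1
        have hle : jacobiP α β (n-2) b ≤ jacobiP α β (n-1) b := by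
          have : n - 1 = (n - 2) + 1 := by omega
          rw [this]
          exact jacobiP_le_succ α β hα hβ _ b (le_of_lt hb1)
        have hbP : jacobiP α β (n-1) b < b * jacobiP α β (n-1) b := by
          nlinarith
        have : 0 < (b * jacobiP α β (n - 1) b - jacobiP α β (n - 2) b) / K := by
          apply div_pos _ hK; linarith
        simp only [sub_self]
        linarith [this]
      have hfxs : X1jacobiP α β n xs < 0 := by
        rw [hfx, if_pos h2]
        have hxs1 : 1 < xs := lt_trans hb1 hxsgt
        have hP2 : 0 < jacobiP α β (n-2) xs := jacobiP_pos α β hα hβ _ xs hxs1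
        have hP1 : 0 < jacobiP α β (n-1) xs := jacobiP_pos α β hα hβ _ xs hxs1
        have hxsb' : xs - b = 2 * b / K := by rw [hxsb]; ring
        rw [hxsb']
        have hkey : -(1/2) * (2 * b / K) * jacobiP α β (n-1) xs +
            b * jacobiP α β (n-1) xs / K = 0 := by
          field_simp
          ring
        have : (b * jacobiP α β (n - 1) xs - jacobiP α β (n - 2) xs) / K
            = b * jacobiP α β (n-1) xs / K - jacobiP α β (n - 2) xs / K := by ring
        rw [this]
        have hneg : 0 < jacobiP α β (n - 2) xs / K := div_pos hP2 hK
        linarith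
      -- IVT
      have hcont : ContinuousOn (X1jacobiP α β n) (Set.Icc b xs) := by
        apply Continuous.continuousOn
        have hc1 : Continuous (fun x => jacobiP α β (n-1) x) := jacobiP_continuous α β (n-1)
        have hc2 : Continuous (fun x => jacobiP α β (n-2) x) := jacobiP_continuous α β (n-2)
        unfold X1jacobiP
        split
        · fun_prop
        · fun_prop
      have hsub := intermediate_value_Ioo' (le_of_lt hxsgt) hcont
      have h0mem : (0:ℝ) ∈ Set.Ioo (X1jacobiP α β n xs) (X1jacobiP α β n b) :=
        ⟨hfxs, hfb⟩
      obtain ⟨y, hy, hfy⟩ := hsub h0mem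
      exact ⟨y, hy.1, le_of_lt hy.2, hfy⟩
  -- no zero above xs
  have habove : ∀ x, xs < x → X1jacobiP α β n x < 0 := by
    intro x hx
    have hx1 : 1 < x := lt_trans (lt_trans hb1 hxsgt) hx
    have hxb : b < x := lt_trans hxsgt hx
    rw [hfx]
    have hP1 : 0 < jacobiP α β (n-1) x := jacobiP_pos α β hα hβ _ x hx1
    have hQ : 0 ≤ (if 2 ≤ n then jacobiP α β (n - 2) x else 0) := by
      split
      · exact le_of_lt (jacobiP_pos α β hα hβ _ x hx1)
      · exact le_refl 0
    have hgap : 2 * b / K < x - b := by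
      have := hxsb ▸ hx
      linarith
    have h1 : -(1/2) * (x - b) * jacobiP α β (n-1) x + b * jacobiP α β (n-1) x / K < 0 := by
      have hgap' : 2 * b < (x - b) * K := by
        rw [div_lt_iff₀ hK] at hgap; linarith
      have hmul := mul_lt_mul_of_pos_right hgap' hP1
      have : b * jacobiP α β (n-1) x / K < (1/2) * (x - b) * jacobiP α β (n-1) x := by
        rw [div_lt_iff₀ hK]
        nlinarith [hmul, hP1, hK]
      linarith
    have h2 : (b * jacobiP α β (n - 1) x -
        (if 2 ≤ n then jacobiP α β (n - 2) x else 0)) / K ≤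
        b * jacobiP α β (n-1) x / K := by
      apply div_le_div_of_nonneg_right _ hK.le
      linarith
    linarith
  obtain ⟨y, hyb, hyxs, hy0⟩ := hexists
  obtain ⟨k, hk1, hkn, hyk⟩ := (hiff y).mp hy0
  have hzk : z n k ≤ z n n := by
    rcases eq_or_lt_of_le hkn with h | h
    · rw [h]
    · exact le_of_lt (hmono ⟨hk1, hkn⟩ ⟨hn, le_refl n⟩ h)
  have hznz : X1jacobiP α β n (z n n) = 0 := (hiff _).mpr ⟨n, hn, le_refl n, rfl⟩
  constructor
  · calc b < y := hyb
      _ = z n k := hyk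
      _ ≤ z n n := hzk
  · by_contra hgt
    push_neg at hgt
    exact absurd hznz (ne_of_lt (habove _ hgt))
end

section
/- Let α > 0. Then the exceptional zero x̂_{n,1}^{(α)} of the X₁-Laguerre polynomial L̂_n^{(α)} satisfies x̂_{1,1}^{(α)} = −(α+1) and, for every n ≥ 2, x̂_{n,1}^{(α)} ∈ (−α−1, −α); in particular x̂_{n,1}^{(α)} ∈ [−α−1, −α) for all n ≥ 1. -/
open Finset Filter

lemma lag_cont (α : ℝ) (m : ℕ) : Continuous (laguerreL α m) := by
  unfold laguerreL
  exact continuous_finset_sum _ fun k _ => by fun_prop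

lemma lag_pos (α : ℝ) (hα : 0 < α) (m : ℕ) {x : ℝ} (hx : x ≤ 0) :
    0 < laguerreL α m x := by
  unfold laguerreL
  apply Finset.sum_pos'
  · intro k _
    have h2 : (-1 : ℝ) ^ k * x ^ k = (-x) ^ k := by rw [← neg_one_mul x, mul_pow]
    have h1 : (0 : ℝ) ≤ (-x) ^ k := pow_nonneg (by linarith) k
    have hP : (0 : ℝ) ≤ ∏ j ∈ Finset.Icc (k + 1) m, (α + (j : ℝ)) :=
      Finset.prod_nonneg fun j _ => by positivity
    have heq : (-1 : ℝ) ^ k / (Nat.factorial k : ℝ) *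
        ((∏ j ∈ Finset.Icc (k + 1) m, (α + (j : ℝ))) / (Nat.factorial (m - k) : ℝ)) * x ^ k
        = (-x) ^ k * ((∏ j ∈ Finset.Icc (k + 1) m, (α + (j : ℝ))) /
            ((Nat.factorial k : ℝ) * (Nat.factorial (m - k) : ℝ))) := by
      rw [← h2]; ring
    rw [heq]
    exact mul_nonneg h1 (div_nonneg hP (by positivity))
  · refine ⟨0, Finset.mem_range.mpr (Nat.succ_pos m), ?_⟩
    have hP : (0 : ℝ) < ∏ j ∈ Finset.Icc 1 m, (α + (j : ℝ)) :=
      Finset.prod_pos fun j _ => by positivity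
    simp only [pow_zero, Nat.sub_zero, Nat.factorial_zero, Nat.cast_one, mul_one, one_div]
    have : (0:ℝ) < (Nat.factorial m : ℝ) := by positivity
    rw [inv_one, one_mul]
    positivity

lemma lag_succ (α : ℝ) (hα : 0 < α) (m : ℕ) :
    laguerreL α m (-α) < laguerreL α (m + 1) (-α) := by
  unfold laguerreL
  conv_rhs => rw [Finset.sum_range_succ]
  have hlast : 0 < (-1 : ℝ) ^ (m + 1) / (Nat.factorial (m + 1) : ℝ) *
      ((∏ j ∈ Finset.Icc (m + 1 + 1) (m + 1), (α + (j : ℝ))) /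
        (Nat.factorial (m + 1 - (m + 1)) : ℝ)) * (-α) ^ (m + 1) := by
    rw [Finset.Icc_eq_empty (by omega), Finset.prod_empty, Nat.sub_self]
    have h2 : (-1 : ℝ) ^ (m+1) * (-α) ^ (m+1) = α ^ (m+1) := by
      rw [← mul_pow]; ring_nf
    have heq : (-1 : ℝ) ^ (m + 1) / (Nat.factorial (m + 1) : ℝ) *
        ((1 : ℝ) / (Nat.factorial 0 : ℝ)) * (-α) ^ (m + 1)
        = α ^ (m+1) / (Nat.factorial (m+1) : ℝ) := by
      rw [Nat.factorial_zero]; push_cast; rw [← h2]; ring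
    rw [heq]; positivity
  have hsum : ∑ k ∈ Finset.range (m + 1),
      (-1 : ℝ) ^ k / (Nat.factorial k : ℝ) *
        ((∏ j ∈ Finset.Icc (k + 1) m, (α + (j : ℝ))) / (Nat.factorial (m - k) : ℝ)) * (-α) ^ k
      ≤ ∑ k ∈ Finset.range (m + 1),
      (-1 : ℝ) ^ k / (Nat.factorial k : ℝ) *
        ((∏ j ∈ Finset.Icc (k + 1) (m + 1), (α + (j : ℝ))) / (Nat.factorial (m + 1 - k) : ℝ)) * (-α) ^ k := by
    apply Finset.sum_le_sum
    intro k hk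
    have hkm : k ≤ m := Nat.lt_succ_iff.mp (Finset.mem_range.mp hk)
    have h2 : (-1 : ℝ) ^ k * (-α) ^ k = α ^ k := by rw [← mul_pow]; ring_nf
    have hprod : ∏ j ∈ Finset.Icc (k + 1) (m + 1), (α + (j : ℝ))
        = (∏ j ∈ Finset.Icc (k + 1) m, (α + (j : ℝ))) * (α + ((m+1 : ℕ) : ℝ)) :=
      Finset.prod_Icc_succ_top (by omega) _
    have hmk : m + 1 - k = (m - k) + 1 := by omega
    set P := ∏ j ∈ Finset.Icc (k + 1) m, (α + (j : ℝ)) with hPdef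
    have hPpos : 0 < P := Finset.prod_pos fun j _ => by positivity
    rw [hprod, hmk, Nat.factorial_succ]
    have heqL : (-1 : ℝ) ^ k / (Nat.factorial k : ℝ) * (P / (Nat.factorial (m - k) : ℝ)) * (-α) ^ k
        = α ^ k * P / ((Nat.factorial k : ℝ) * (Nat.factorial (m - k) : ℝ)) := by
      rw [← h2]; ring
    have heqR : (-1 : ℝ) ^ k / (Nat.factorial k : ℝ) *
        (P * (α + ((m+1 : ℕ) : ℝ)) / ((((m - k) + 1) * Nat.factorial (m - k) : ℕ) : ℝ)) * (-α) ^ k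
        = α ^ k * (P * (α + ((m+1 : ℕ) : ℝ))) /
            ((Nat.factorial k : ℝ) * ((((m - k) : ℕ) : ℝ) + 1) * (Nat.factorial (m - k) : ℝ)) := by
      have hfk0 : ((Nat.factorial k : ℕ) : ℝ) ≠ 0 := by positivity
      have hfm0 : ((Nat.factorial (m - k) : ℕ) : ℝ) ≠ 0 := by positivity
      have ht0 : ((((m - k) : ℕ) : ℝ) + 1) ≠ 0 := by positivity
      push_cast
      rw [← h2]
      field_simp
    rw [heqL, heqR]
    have hA : (0:ℝ) ≤ α ^ k * P := by positivity
    have hfk : (0:ℝ) < (Nat.factorial k : ℝ) := by positivity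
    have hfm : (0:ℝ) < (Nat.factorial (m - k) : ℝ) := by positivity
    have ht : ((((m - k) : ℕ) : ℝ) + 1) ≤ α + ((m+1 : ℕ) : ℝ) := by
      have : (((m - k) : ℕ) : ℝ) ≤ ((m : ℕ) : ℝ) := Nat.cast_le.mpr (Nat.sub_le m k)
      push_cast
      push_cast at this
      linarith
    have htpos : (0:ℝ) < (((m - k) : ℕ) : ℝ) + 1 := by positivity
    rw [div_le_div_iff₀ (by positivity) (by positivity)]
    nlinarith [mul_nonneg hA hfk.le, mul_nonneg (mul_nonneg hA hfk.le) hfm.le]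
  linarith

lemma lag_zero (α : ℝ) (x : ℝ) : laguerreL α 0 x = 1 := by
  simp [laguerreL, Finset.Icc_eq_empty (show ¬(1:ℕ) ≤ 0 by omega)]

lemma X1_cont (α : ℝ) (n : ℕ) : Continuous (X1laguerreL α n) := by
  have h1 := lag_cont α (n - 1)
  have h2 := lag_cont α (n - 2)
  unfold X1laguerreL
  split_ifs <;> fun_prop

lemma X1_pos_left (α : ℝ) (hα : 0 < α) (n : ℕ) (hn : 2 ≤ n) {x : ℝ} (hx : x ≤ -α - 1) :
    0 < X1laguerreL α n x := by
  unfold X1laguerreL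
  rw [if_pos hn]
  have h1 := lag_pos α hα (n - 1) (show x ≤ 0 by linarith)
  have h2 := lag_pos α hα (n - 2) (show x ≤ 0 by linarith)
  have h3 : 0 ≤ -(x + α + 1) := by linarith
  nlinarith [mul_nonneg h3 h1.le]

lemma X1_neg_at (α : ℝ) (hα : 0 < α) (n : ℕ) (hn : 2 ≤ n) :
    X1laguerreL α n (-α) < 0 := by
  unfold X1laguerreL
  rw [if_pos hn]
  have hm : n - 1 = (n - 2) + 1 := by omega
  rw [hm]
  have h := lag_succ α hα (n - 2)
  have hc : -(-α + α + 1) = (-1 : ℝ) := by ring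
  rw [hc]
  linarith

/-- For `α > 0`, the exceptional zero of the X₁-Laguerre polynomial satisfies
`x̂_{1,1} = -(α+1)`, `x̂_{n,1} ∈ (-α-1, -α)` for `n ≥ 2`, and `x̂_{n,1} ∈ [-α-1, -α)` for all
`n ≥ 1`. -/
theorem X1laguerre_exceptional_zero_location
    (α : ℝ) (hα : 0 < α) (z : ℕ → ℕ → ℝ)
    (hz : ∀ n : ℕ, 1 ≤ n → EnumZeros (X1laguerreL α n) n (z n)) :
    z 1 1 = -(α + 1) ∧
      (∀ n : ℕ, 2 ≤ n → -α - 1 < z n 1 ∧ z n 1 < -α) ∧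
      (∀ n : ℕ, 1 ≤ n → -α - 1 ≤ z n 1 ∧ z n 1 < -α) := by
  have part1 : z 1 1 = -(α + 1) := by
    obtain ⟨mono1, hiff1⟩ := hz 1 le_rfl
    have h0 : X1laguerreL α 1 (-(α + 1)) = 0 := by
      unfold X1laguerreL
      norm_num [lag_zero]
    obtain ⟨k, hk1, hk1', hkeq⟩ := (hiff1 _).mp h0
    have hk : k = 1 := le_antisymm hk1' hk1
    subst hk
    exact hkeq.symm
  have part2 : ∀ n : ℕ, 2 ≤ n → -α - 1 < z n 1 ∧ z n 1 < -α := by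
    intro n hn
    obtain ⟨mono, hiff⟩ := hz n (by omega)
    have hab : (-α - 1 : ℝ) ≤ -α := by linarith
    have hfa : 0 < X1laguerreL α n (-α - 1) := X1_pos_left α hα n hn le_rfl
    have hfb : X1laguerreL α n (-α) < 0 := X1_neg_at α hα n hn
    obtain ⟨c, hcmem, hc0⟩ :=
      intermediate_value_Ioo' hab (X1_cont α n).continuousOn ⟨hfb, hfa⟩
    obtain ⟨k, hk1, hkn, hck⟩ := (hiff c).mp hc0
    have hz1 : X1laguerreL α n (z n 1) = 0 :=
      (hiff (z n 1)).mpr ⟨1, le_rfl, by omega, rfl⟩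
    have hle : z n 1 ≤ z n k := by
      rcases eq_or_lt_of_le hk1 with h | h
      · rw [← h]
      · exact le_of_lt (mono (Set.mem_Icc.mpr ⟨le_rfl, by omega⟩)
          (Set.mem_Icc.mpr ⟨hk1, hkn⟩) h)
    have hupper : z n 1 < -α := by
      calc z n 1 ≤ z n k := hle
        _ = c := hck.symm
        _ < -α := hcmem.2
    have hlower : -α - 1 < z n 1 := by
      by_contra h
      push_neg at h
      exact absurd hz1 (ne_of_gt (X1_pos_left α hα n hn h))
    exact ⟨hlower, hupper⟩
  refine ⟨part1, part2, ?_⟩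
  intro n hn
  rcases eq_or_lt_of_le hn with h | h
  · rw [← h, part1]
    constructor <;> linarith
  · obtain ⟨h1, h2⟩ := part2 n h
    exact ⟨le_of_lt h1, h2⟩
end

section
/- Let α > 0 and let n, k be integers with 1 ≤ k ≤ n. Then the zeros of the X₁-Jacobi polynomials converge, after scaling, to the zeros of the X₁-Laguerre polynomial: lim_{β→∞} β·(1 − x̂_{n,k}^{(α,β)})/2 = x̂_{n,n+1−k}^{(α)}, where x̂_{n,1}^{(α,β)} < … < x̂_{n,n}^{(α,β)} are the zeros of P̂_n^{(α,β)} and x̂_{n,1}^{(α)} < … < x̂_{n,n}^{(α)} are the zeros of L̂_n^{(α)}, each in increasing order. -/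
open Finset Filter

open Polynomial

lemma tendsto_ratio_aux (c : ℝ) :
    Filter.Tendsto (fun β : ℝ => (β + c) / β) Filter.atTop (nhds 1) := by
  have h : Filter.Tendsto (fun β : ℝ => 1 + c * β⁻¹) Filter.atTop (nhds (1 + c * 0)) :=
    tendsto_const_nhds.add (tendsto_inv_atTop_zero.const_mul c)
  simp only [mul_zero, add_zero] at h
  refine Filter.Tendsto.congr' ?_ h
  filter_upwards [eventually_gt_atTop (0:ℝ)] with β hβ
  field_simp

lemma tendsto_jacobiP_laguerreL (α y : ℝ) (m : ℕ) :
    Filter.Tendsto (fun β : ℝ => jacobiP α β m (1 - 2 * y / β)) Filter.atTop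
      (nhds (laguerreL α m y)) := by
  unfold jacobiP laguerreL
  refine tendsto_finset_sum _ ?_
  intro s hs
  have hsm : s ≤ m := Nat.lt_succ_iff.mp (Finset.mem_range.mp hs)
  have hcard : (Finset.Icc (m - s + 1) m).card = s := by
    rw [Nat.card_Icc]; omega
  set A : ℝ := (∏ j ∈ Finset.Icc (s + 1) m, (α + (j : ℝ))) with hA
  have h1 : Filter.Tendsto (fun β : ℝ => ∏ j ∈ Finset.Icc (m - s + 1) m, ((β + (j:ℝ)) / β))
      Filter.atTop (nhds 1) := by
    have := tendsto_finset_prod (f := fun (j : ℕ) (β : ℝ) => (β + (j:ℝ)) / β)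
      (a := fun _ => (1:ℝ)) (Finset.Icc (m - s + 1) m)
      (fun j _ => tendsto_ratio_aux (j:ℝ))
    simpa using this
  have h2 : Filter.Tendsto (fun β : ℝ => (1 - y * β⁻¹) ^ (m - s)) Filter.atTop (nhds 1) := by
    have h0 : Filter.Tendsto (fun β : ℝ => 1 - y * β⁻¹) Filter.atTop (nhds (1 - y * 0)) :=
      tendsto_const_nhds.sub (tendsto_inv_atTop_zero.const_mul y)
    simp only [mul_zero, sub_zero] at h0
    simpa using h0.pow (m - s)
  have h3 : Filter.Tendsto (fun β : ℝ =>
      A / (Nat.factorial (m - s) : ℝ) * ((-y) ^ s / (Nat.factorial s : ℝ)) *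
        (∏ j ∈ Finset.Icc (m - s + 1) m, ((β + (j:ℝ)) / β)) * (1 - y * β⁻¹) ^ (m - s))
      Filter.atTop (nhds (A / (Nat.factorial (m - s) : ℝ) *
        ((-y) ^ s / (Nat.factorial s : ℝ)) * 1 * 1)) :=
    ((tendsto_const_nhds.mul h1).mul h2)
  have hval : (-1 : ℝ) ^ s / (Nat.factorial s : ℝ) *
      (A / (Nat.factorial (m - s) : ℝ)) * y ^ s =
      A / (Nat.factorial (m - s) : ℝ) * ((-y) ^ s / (Nat.factorial s : ℝ)) * 1 * 1 := by
    rw [neg_pow]; ring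
  rw [hval]
  refine Filter.Tendsto.congr' ?_ h3
  filter_upwards [eventually_gt_atTop (0:ℝ)] with β hβ
  have hβ0 : β ≠ 0 := ne_of_gt hβ
  rw [Finset.prod_div_distrib, Finset.prod_const, hcard]
  have e1 : (1 - 2 * y / β - 1) / 2 = -y / β := by field_simp; ring
  have e2 : (1 - 2 * y / β + 1) / 2 = 1 - y * β⁻¹ := by field_simp; ring
  rw [e1, e2, div_pow]
  ring

lemma tendsto_X1_aux (α : ℝ) (hα : 0 < α) (n : ℕ) (hn : 1 ≤ n) (y : ℝ) :
    Filter.Tendsto (fun β : ℝ => β * X1jacobiP α β n (1 - 2 * y / β)) Filter.atTop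
      (nhds (-(X1laguerreL α n y))) := by
  have hL1 := tendsto_jacobiP_laguerreL α y (n - 1)
  set L1 : ℝ := laguerreL α (n - 1) y with hL1def
  set L2 : ℝ := (if 2 ≤ n then laguerreL α (n - 2) y else 0) with hL2def
  have hQ : Filter.Tendsto
      (fun β : ℝ => if 2 ≤ n then jacobiP α β (n - 2) (1 - 2 * y / β) else 0)
      Filter.atTop (nhds L2) := by
    rw [hL2def]
    split_ifs with h
    · exact tendsto_jacobiP_laguerreL α y (n - 2)
    · exact tendsto_const_nhds
  have hinv : Filter.Tendsto (fun β : ℝ => β⁻¹) Filter.atTop (nhds 0) :=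
    tendsto_inv_atTop_zero
  have ht1 : Filter.Tendsto (fun β : ℝ => 1 - α * β⁻¹) Filter.atTop (nhds 1) := by
    have := (tendsto_const_nhds (x := (1:ℝ))).sub (hinv.const_mul α)
    simpa using this
  have ht2 : Filter.Tendsto (fun β : ℝ => 1 + α * β⁻¹) Filter.atTop (nhds 1) := by
    have := (tendsto_const_nhds (x := (1:ℝ))).add (hinv.const_mul α)
    simpa using this
  have ht3 : Filter.Tendsto (fun β : ℝ => 1 + (2 * (n:ℝ) - 2 + α) * β⁻¹) Filter.atTop (nhds 1) := by
    have := (tendsto_const_nhds (x := (1:ℝ))).add (hinv.const_mul (2 * (n:ℝ) - 2 + α))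
    simpa using this
  have hmain : Filter.Tendsto (fun β : ℝ =>
      (y + α / (1 - α * β⁻¹)) * jacobiP α β (n - 1) (1 - 2 * y / β) +
        (1 / (1 + (2 * (n:ℝ) - 2 + α) * β⁻¹)) *
          (((1 + α * β⁻¹) / (1 - α * β⁻¹)) * jacobiP α β (n - 1) (1 - 2 * y / β) -
            (if 2 ≤ n then jacobiP α β (n - 2) (1 - 2 * y / β) else 0)))
      Filter.atTop
      (nhds ((y + α / 1) * L1 + (1 / 1) * ((1 / 1) * L1 - L2))) := by
    refine Filter.Tendsto.add ?_ ?_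
    · exact (tendsto_const_nhds.add (tendsto_const_nhds.div ht1 one_ne_zero)).mul hL1
    · exact ((tendsto_const_nhds.div ht3 one_ne_zero)).mul
        (((ht2.div ht1 one_ne_zero).mul hL1).sub hQ)
  have hval : -(X1laguerreL α n y) = (y + α / 1) * L1 + (1 / 1) * ((1 / 1) * L1 - L2) := by
    rw [X1laguerreL, ← hL1def, ← hL2def]; ring
  rw [hval]
  refine Filter.Tendsto.congr' ?_ hmain
  filter_upwards [eventually_gt_atTop (max α 1)] with β hβ
  have hβ1 : (1:ℝ) < β := lt_of_le_of_lt (le_max_right _ _) hβ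
  have hβ0 : (0:ℝ) < β := lt_trans one_pos hβ1
  have hβne : β ≠ 0 := ne_of_gt hβ0
  have hβα : α < β := lt_of_le_of_lt (le_max_left _ _) hβ
  have hβαne : β - α ≠ 0 := ne_of_gt (by linarith)
  have hn2 : (0:ℝ) ≤ 2 * (n:ℝ) - 2 := by
    have : (1:ℝ) ≤ (n:ℝ) := by exact_mod_cast hn
    linarith
  have hD : 2 * (n:ℝ) - 2 + α + β ≠ 0 := ne_of_gt (by linarith)
  have he1 : 1 - α * β⁻¹ ≠ 0 := by
    have : 1 - α * β⁻¹ = (β - α) / β := by field_simp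
    rw [this]; exact div_ne_zero hβαne hβne
  have he3 : 1 + (2 * (n:ℝ) - 2 + α) * β⁻¹ ≠ 0 := by
    have : 1 + (2 * (n:ℝ) - 2 + α) * β⁻¹ = (2 * (n:ℝ) - 2 + α + β) / β := by field_simp; ring
    rw [this]; exact div_ne_zero hD hβne
  rw [X1jacobiP]
  set P : ℝ := jacobiP α β (n - 1) (1 - 2 * y / β) with hP
  set Q : ℝ := (if 2 ≤ n then jacobiP α β (n - 2) (1 - 2 * y / β) else 0) with hQdef
  field_simp
  ring

lemma laguerre_exists_poly (α : ℝ) (m : ℕ) :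
    ∃ p : Polynomial ℝ, p.natDegree ≤ m ∧ ∀ x, p.eval x = laguerreL α m x := by
  refine ⟨∑ k ∈ Finset.range (m + 1),
    Polynomial.C ((-1 : ℝ) ^ k / (Nat.factorial k : ℝ) *
      ((∏ j ∈ Finset.Icc (k + 1) m, (α + (j : ℝ))) / (Nat.factorial (m - k) : ℝ))) * X ^ k,
    ?_, ?_⟩
  · apply Polynomial.natDegree_sum_le_of_forall_le
    intro k hk
    refine le_trans (Polynomial.natDegree_mul_le) ?_
    simp only [Polynomial.natDegree_C, Polynomial.natDegree_X_pow, zero_add]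
    exact Nat.lt_succ_iff.mp (Finset.mem_range.mp hk)
  · intro x
    rw [Polynomial.eval_finset_sum, laguerreL]
    refine Finset.sum_congr rfl fun k _ => ?_
    simp [mul_assoc]

lemma jacobi_exists_poly (α β : ℝ) (m : ℕ) :
    ∃ p : Polynomial ℝ, p.natDegree ≤ m ∧ ∀ x, p.eval x = jacobiP α β m x := by
  refine ⟨∑ s ∈ Finset.range (m + 1),
    Polynomial.C (((∏ j ∈ Finset.Icc (s + 1) m, (α + (j : ℝ))) / (Nat.factorial (m - s) : ℝ)) *
        ((∏ j ∈ Finset.Icc (m - s + 1) m, (β + (j : ℝ))) / (Nat.factorial s : ℝ))) *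
      (Polynomial.C (2⁻¹ : ℝ) * (X - Polynomial.C 1)) ^ s *
      (Polynomial.C (2⁻¹ : ℝ) * (X + Polynomial.C 1)) ^ (m - s), ?_, ?_⟩
  · apply Polynomial.natDegree_sum_le_of_forall_le
    intro s hs
    have hsm : s ≤ m := Nat.lt_succ_iff.mp (Finset.mem_range.mp hs)
    refine le_trans (Polynomial.natDegree_mul_le) ?_
    have h1 : (Polynomial.C (2⁻¹ : ℝ) * (X - Polynomial.C 1)).natDegree ≤ 1 := by
      refine le_trans (Polynomial.natDegree_mul_le) ?_
      simp only [Polynomial.natDegree_C, Polynomial.natDegree_X_sub_C, zero_add, le_refl]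
    have h2 : (Polynomial.C (2⁻¹ : ℝ) * (X + Polynomial.C 1)).natDegree ≤ 1 := by
      refine le_trans (Polynomial.natDegree_mul_le) ?_
      simp only [Polynomial.natDegree_C, Polynomial.natDegree_X_add_C, zero_add, le_refl]
    calc (Polynomial.C _ * (Polynomial.C (2⁻¹ : ℝ) * (X - Polynomial.C 1)) ^ s).natDegree
          + ((Polynomial.C (2⁻¹ : ℝ) * (X + Polynomial.C 1)) ^ (m - s)).natDegree
        ≤ (0 + s * 1) + (m - s) * 1 := by
          gcongr
          · refine le_trans (Polynomial.natDegree_mul_le) ?_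
            simp only [Polynomial.natDegree_C, zero_add]
            exact le_trans (Polynomial.natDegree_pow_le) (by nlinarith [h1])
          · exact le_trans (Polynomial.natDegree_pow_le) (by nlinarith [h2])
      _ ≤ m := by omega
  · intro x
    rw [Polynomial.eval_finset_sum, jacobiP]
    refine Finset.sum_congr rfl fun s _ => ?_
    simp only [Polynomial.eval_mul, Polynomial.eval_pow, Polynomial.eval_C, Polynomial.eval_sub,
      Polynomial.eval_add, Polynomial.eval_X, Polynomial.eval_one]
    ring

lemma X1laguerre_exists_poly (α : ℝ) (n : ℕ) (hn : 1 ≤ n) :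
    ∃ p : Polynomial ℝ, p.natDegree ≤ n ∧ ∀ x, p.eval x = X1laguerreL α n x := by
  obtain ⟨p1, hp1d, hp1⟩ := laguerre_exists_poly α (n - 1)
  obtain ⟨p2, hp2d, hp2⟩ := laguerre_exists_poly α (n - 2)
  refine ⟨(-(X + Polynomial.C (α + 1))) * p1 + (if 2 ≤ n then p2 else 0), ?_, ?_⟩
  · refine le_trans (Polynomial.natDegree_add_le _ _) ?_
    have h1 : ((-(X + Polynomial.C (α + 1))) * p1).natDegree ≤ n := by
      refine le_trans (Polynomial.natDegree_mul_le) ?_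
      have : (-(X + Polynomial.C (α + 1))).natDegree ≤ 1 := by
        rw [Polynomial.natDegree_neg]
        refine le_trans (Polynomial.natDegree_add_le _ _) ?_
        simp
      omega
    have h2 : (if 2 ≤ n then p2 else 0).natDegree ≤ n := by
      split_ifs
      · omega
      · simp
    omega
  · intro x
    rw [X1laguerreL]
    simp only [Polynomial.eval_add, Polynomial.eval_mul, Polynomial.eval_neg, Polynomial.eval_X,
      Polynomial.eval_C, hp1]
    congr 1
    · ring_nf
    · split_ifs
      · exact hp2 x
      · simp

lemma X1jacobi_exists_poly (α β : ℝ) (n : ℕ) (hn : 1 ≤ n) :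
    ∃ p : Polynomial ℝ, p.natDegree ≤ n ∧ ∀ x, p.eval x = X1jacobiP α β n x := by
  obtain ⟨p1, hp1d, hp1⟩ := jacobi_exists_poly α β (n - 1)
  obtain ⟨p2, hp2d, hp2⟩ := jacobi_exists_poly α β (n - 2)
  refine ⟨Polynomial.C (-(1/2) : ℝ) * (X - Polynomial.C ((β + α) / (β - α))) * p1 +
    Polynomial.C (2 * (n : ℝ) - 2 + α + β)⁻¹ *
      (Polynomial.C ((β + α) / (β - α)) * p1 - (if 2 ≤ n then p2 else 0)), ?_, ?_⟩
  · refine le_trans (Polynomial.natDegree_add_le _ _) ?_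
    have h1 : (Polynomial.C (-(1/2) : ℝ) * (X - Polynomial.C ((β + α) / (β - α))) * p1).natDegree
        ≤ n := by
      refine le_trans (Polynomial.natDegree_mul_le) ?_
      have : (Polynomial.C (-(1/2) : ℝ) * (X - Polynomial.C ((β + α) / (β - α)))).natDegree ≤ 1 := by
        refine le_trans (Polynomial.natDegree_mul_le) ?_
        simp [Polynomial.natDegree_X_sub_C]
      omega
    have h2 : (Polynomial.C (2 * (n : ℝ) - 2 + α + β)⁻¹ *
        (Polynomial.C ((β + α) / (β - α)) * p1 - (if 2 ≤ n then p2 else 0))).natDegree ≤ n := by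
      refine le_trans (Polynomial.natDegree_mul_le) ?_
      have hsub : (Polynomial.C ((β + α) / (β - α)) * p1 - (if 2 ≤ n then p2 else 0)).natDegree
          ≤ n := by
        refine le_trans (Polynomial.natDegree_sub_le _ _) ?_
        have ha : (Polynomial.C ((β + α) / (β - α)) * p1).natDegree ≤ n := by
          refine le_trans (Polynomial.natDegree_mul_le) ?_
          simp only [Polynomial.natDegree_C, zero_add]
          omega
        have hb : (if 2 ≤ n then p2 else 0).natDegree ≤ n := by
          split_ifs
          · omega
          · simp
        omega
      simp only [Polynomial.natDegree_C, zero_add]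
      exact hsub
    omega
  · intro x
    rw [X1jacobiP]
    simp only [Polynomial.eval_add, Polynomial.eval_mul, Polynomial.eval_sub, Polynomial.eval_X,
      Polynomial.eval_C, hp1]
    have hite : Polynomial.eval x (if 2 ≤ n then p2 else 0)
        = (if 2 ≤ n then jacobiP α β (n - 2) x else 0) := by
      split_ifs
      · exact hp2 x
      · simp
    rw [hite]
    ring

lemma enum_factor {n : ℕ} (hn : 1 ≤ n) {f : ℝ → ℝ} {p : Polynomial ℝ}
    (heval : ∀ x, p.eval x = f x) (hdeg : p.natDegree ≤ n) {z : ℕ → ℝ}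
    (hz : EnumZeros f n z) :
    ∃ c : ℝ, c ≠ 0 ∧ ∀ x, f x = c * ∏ k ∈ Finset.Icc 1 n, (x - z k) := by
  obtain ⟨hmono, hiff⟩ := hz
  have hinj : Set.InjOn z (Set.Icc 1 n) := hmono.injOn
  -- p ≠ 0
  have hp0 : p ≠ 0 := by
    intro h
    have h0 : f (z n + 1) = 0 := by rw [← heval, h, Polynomial.eval_zero]
    obtain ⟨k, hk1, hkn, hk⟩ := (hiff _).mp h0
    have : z k ≤ z n := by
      rcases eq_or_lt_of_le hkn with h' | h'
      · rw [h']
      · exact le_of_lt (hmono ⟨hk1, hkn⟩ ⟨hn, le_refl n⟩ h')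
    linarith [hk ▸ this]
  classical
  set s : Finset ℝ := (Finset.Icc 1 n).image z with hs
  have hinj' : Set.InjOn z ↑(Finset.Icc 1 n) := by
    rwa [Finset.coe_Icc]
  have hcard : s.card = n := by
    rw [hs, Finset.card_image_of_injOn hinj', Nat.card_Icc]
    omega
  have hle : s.val ≤ p.roots := by
    rw [Multiset.le_iff_subset s.nodup]
    intro a ha
    have ha' : a ∈ s := ha
    obtain ⟨k, hk, rfl⟩ := Finset.mem_image.mp ha'
    rw [Polynomial.mem_roots hp0]
    show p.eval (z k) = 0
    rw [heval]
    rw [Finset.mem_Icc] at hk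
    exact (hiff _).mpr ⟨k, hk.1, hk.2, rfl⟩
  have hdvd : (s.val.map fun a => X - C a).prod ∣ p :=
    (Multiset.prod_X_sub_C_dvd_iff_le_roots hp0 s.val).mpr hle
  obtain ⟨r, hr⟩ := hdvd
  set q : Polynomial ℝ := (s.val.map fun a => X - C a).prod with hq
  have hqmonic : q.Monic := monic_multiset_prod_of_monic _ _ (fun a _ => monic_X_sub_C a)
  have hqdeg : q.natDegree = n := by
    rw [hq, natDegree_multiset_prod_X_sub_C_eq_card]
    exact hcard
  have hq0 : q ≠ 0 := hqmonic.ne_zero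
  have hr0 : r ≠ 0 := by
    intro h; rw [h, mul_zero] at hr; exact hp0 hr
  have hrdeg : r.natDegree = 0 := by
    have := Polynomial.natDegree_mul hq0 hr0
    rw [← hr, hqdeg] at this
    omega
  obtain ⟨c, hc⟩ := Polynomial.natDegree_eq_zero.mp hrdeg
  have hc0 : c ≠ 0 := by
    intro h; rw [h, map_zero] at hc; exact hr0 hc.symm
  refine ⟨c, hc0, fun x => ?_⟩
  have : q.eval x = ∏ k ∈ Finset.Icc 1 n, (x - z k) := by
    rw [hq, Polynomial.eval_multiset_prod]
    have : (Multiset.map (Polynomial.eval x) (Multiset.map (fun a => X - C a) s.val)).prod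
        = ∏ a ∈ s, (x - a) := by
      rw [Multiset.map_map, Finset.prod_eq_multiset_prod]
      congr 1
      apply Multiset.map_congr rfl
      intro a _
      simp
    rw [this, hs, Finset.prod_image (fun a ha b hb => hinj' ha hb)]
  rw [← heval, hr, Polynomial.eval_mul, this, ← hc, Polynomial.eval_C, mul_comm]

lemma exists_sep (n : ℕ) (z : ℕ → ℝ) (hz : StrictMonoOn z (Set.Icc 1 n)) (ε : ℝ) (hε : 0 < ε) :
    ∃ ε' : ℝ, 0 < ε' ∧ ε' ≤ ε ∧ ∀ i ∈ Finset.Icc 1 n, ∀ j ∈ Finset.Icc 1 n, i ≠ j →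
      2 * ε' < |z i - z j| := by
  classical
  set T := ((Finset.Icc 1 n) ×ˢ (Finset.Icc 1 n)).filter (fun p => p.1 ≠ p.2) with hT
  by_cases hTne : T.Nonempty
  · set δ := T.inf' hTne (fun p => |z p.1 - z p.2|) with hδ
    have hδpos : 0 < δ := by
      rw [hδ, Finset.lt_inf'_iff]
      intro p hp
      rw [hT, Finset.mem_filter, Finset.mem_product] at hp
      obtain ⟨⟨hp1, hp2⟩, hpne⟩ := hp
      rw [Finset.mem_Icc] at hp1 hp2
      have : z p.1 ≠ z p.2 := fun h =>
        hpne (hz.injOn ⟨hp1.1, hp1.2⟩ ⟨hp2.1, hp2.2⟩ h)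
      rw [abs_pos, sub_ne_zero]
      exact this
    refine ⟨min ε (δ / 3), lt_min hε (by linarith), min_le_left _ _, ?_⟩
    intro i hi j hj hij
    have hmem : (i, j) ∈ T := by
      rw [hT, Finset.mem_filter, Finset.mem_product]
      exact ⟨⟨hi, hj⟩, hij⟩
    have h1 : δ ≤ |z i - z j| := Finset.inf'_le _ hmem
    have h2 : min ε (δ / 3) ≤ δ / 3 := min_le_right _ _
    linarith
  · refine ⟨ε, hε, le_refl ε, ?_⟩
    intro i hi j hj hij
    exact absurd ⟨(i, j), by rw [hT, Finset.mem_filter, Finset.mem_product]; exact ⟨⟨hi, hj⟩, hij⟩⟩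
      hTne

lemma ivt_neg {f : ℝ → ℝ} (hf : Continuous f) {u v : ℝ} (huv : u < v) (h : f u * f v < 0) :
    ∃ x ∈ Set.Ioo u v, f x = 0 := by
  rcases mul_neg_iff.mp h with ⟨h1, h2⟩ | ⟨h1, h2⟩
  · obtain ⟨x, hx, hx0⟩ := intermediate_value_Ioo' (le_of_lt huv) hf.continuousOn
      (Set.mem_Ioo.mpr ⟨h2, h1⟩)
    exact ⟨x, hx, hx0⟩
  · obtain ⟨x, hx, hx0⟩ := intermediate_value_Ioo (le_of_lt huv) hf.continuousOn
      (Set.mem_Ioo.mpr ⟨h1, h2⟩)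
    exact ⟨x, hx, hx0⟩

/-- For `α > 0` and `1 ≤ k ≤ n`, the zeros of the X₁-Jacobi polynomials
converge, after scaling, to the zeros of the X₁-Laguerre polynomial:
`lim_{β→∞} β(1 - x̂_{n,k}^{(α,β)})/2 = x̂_{n,n+1-k}^{(α)}`. -/
theorem X1jacobi_zeros_tendsto_X1laguerre_zeros
    (α : ℝ) (hα : 0 < α) (n k : ℕ) (hk : 1 ≤ k) (hkn : k ≤ n)
    (zJ : ℝ → ℕ → ℝ) (zL : ℕ → ℝ)
    (hzJ : ∀ β : ℝ, α < β → EnumZeros (X1jacobiP α β n) n (zJ β))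
    (hzL : EnumZeros (X1laguerreL α n) n zL) :
    Filter.Tendsto (fun β : ℝ => β * (1 - zJ β k) / 2) Filter.atTop
      (nhds (zL (n + 1 - k))) := by
  classical
  have hn : 1 ≤ n := le_trans hk hkn
  obtain ⟨pL, hpLd, hpLe⟩ := X1laguerre_exists_poly α n hn
  obtain ⟨c, hc0, hfac⟩ := enum_factor hn hpLe hpLd hzL
  rw [Metric.tendsto_nhds]
  intro ε hε
  obtain ⟨ε', hε'0, hε'ε, hsep⟩ := exists_sep n zL hzL.1 ε hε
  have hsign : ∀ i ∈ Finset.Icc 1 n,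
      X1laguerreL α n (zL i - ε') * X1laguerreL α n (zL i + ε') < 0 := by
    intro i hi
    rw [hfac, hfac]
    have hre : (c * ∏ j ∈ Finset.Icc 1 n, (zL i - ε' - zL j)) *
        (c * ∏ j ∈ Finset.Icc 1 n, (zL i + ε' - zL j)) =
        (c * c) * ∏ j ∈ Finset.Icc 1 n, ((zL i - ε' - zL j) * (zL i + ε' - zL j)) := by
      rw [Finset.prod_mul_distrib]; ring
    rw [hre]
    have hcc : 0 < c * c := mul_self_pos.mpr hc0
    have hterm : (zL i - ε' - zL i) * (zL i + ε' - zL i) < 0 := by nlinarith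
    have hrest : 0 < ∏ j ∈ (Finset.Icc 1 n).erase i,
        ((zL i - ε' - zL j) * (zL i + ε' - zL j)) := by
      apply Finset.prod_pos
      intro j hj
      have hji : j ≠ i := Finset.ne_of_mem_erase hj
      have hjmem : j ∈ Finset.Icc 1 n := Finset.mem_of_mem_erase hj
      have h2e : 2 * ε' < |zL i - zL j| := hsep i hi j hjmem (Ne.symm hji)
      rw [Finset.mem_Icc] at hi hjmem
      rcases lt_trichotomy j i with h | h | h
      · have hlt : zL j < zL i := hzL.1 (Set.mem_Icc.mpr ⟨hjmem.1, hjmem.2⟩)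
          (Set.mem_Icc.mpr ⟨hi.1, hi.2⟩) h
        rw [abs_of_pos (sub_pos.mpr hlt)] at h2e
        exact mul_pos (by linarith) (by linarith)
      · exact absurd h hji
      · have hlt : zL i < zL j := hzL.1 (Set.mem_Icc.mpr ⟨hi.1, hi.2⟩)
          (Set.mem_Icc.mpr ⟨hjmem.1, hjmem.2⟩) h
        rw [abs_sub_comm, abs_of_pos (sub_pos.mpr hlt)] at h2e
        exact mul_pos_of_neg_of_neg (by linarith) (by linarith)
    have : ∏ j ∈ Finset.Icc 1 n, ((zL i - ε' - zL j) * (zL i + ε' - zL j)) < 0 := by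
      rw [← Finset.mul_prod_erase _ _ hi]
      exact mul_neg_of_neg_of_pos hterm hrest
    exact mul_neg_of_pos_of_neg hcc this
  have hev2 : ∀ᶠ β : ℝ in Filter.atTop, ∀ i ∈ Finset.Icc 1 n,
      (β * X1jacobiP α β n (1 - 2 * (zL i - ε') / β)) *
        (β * X1jacobiP α β n (1 - 2 * (zL i + ε') / β)) < 0 := by
    rw [Filter.eventually_all_finset]
    intro i hi
    have ht := (tendsto_X1_aux α hα n hn (zL i - ε')).mul (tendsto_X1_aux α hα n hn (zL i + ε'))
    have hlt : -(X1laguerreL α n (zL i - ε')) * -(X1laguerreL α n (zL i + ε')) < 0 := by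
      have := hsign i hi; nlinarith
    exact ht.eventually_lt_const hlt
  filter_upwards [eventually_gt_atTop α, eventually_gt_atTop (0 : ℝ), hev2] with β hβα hβ0 hβs
  have hzJβ := hzJ β hβα
  obtain ⟨pJ, hpJd, hpJe⟩ := X1jacobi_exists_poly α β n hn
  obtain ⟨cβ, hcβ0, hfacJ⟩ := enum_factor hn hpJe hpJd hzJβ
  have hβne : β ≠ 0 := ne_of_gt hβ0
  set yk : ℕ → ℝ := fun j => β * (1 - zJ β j) / 2 with hyk
  set F : ℝ → ℝ := fun y => β * X1jacobiP α β n (1 - 2 * y / β) with hF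
  have hFc : Continuous F := by
    have hFeq : F = fun y => β * (cβ * ∏ j ∈ Finset.Icc 1 n, ((1 - 2 * y / β) - zJ β j)) := by
      funext y; rw [hF]; simp only; rw [hfacJ]
    rw [hFeq]
    refine continuous_const.mul (continuous_const.mul (continuous_finset_prod _ fun j _ => ?_))
    fun_prop
  have hFzero : ∀ y : ℝ, F y = 0 ↔ ∃ j, 1 ≤ j ∧ j ≤ n ∧ y = yk j := by
    intro y
    constructor
    · intro h
      have h' : X1jacobiP α β n (1 - 2 * y / β) = 0 := by
        rcases mul_eq_zero.mp h with h | h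
        · exact absurd h hβne
        · exact h
      obtain ⟨j, hj1, hj2, hj3⟩ := (hzJβ.2 _).mp h'
      refine ⟨j, hj1, hj2, ?_⟩
      show y = β * (1 - zJ β j) / 2
      rw [← hj3]
      field_simp
      ring
    · rintro ⟨j, hj1, hj2, rfl⟩
      show β * X1jacobiP α β n (1 - 2 * (β * (1 - zJ β j) / 2) / β) = 0
      have harg : 1 - 2 * (β * (1 - zJ β j) / 2) / β = zJ β j := by field_simp; ring
      rw [harg, (hzJβ.2 _).mpr ⟨j, hj1, hj2, rfl⟩, mul_zero]
  have hA : ∀ i : Fin n, ∃ x, x ∈ Set.Ioo (zL (i.1 + 1) - ε') (zL (i.1 + 1) + ε') ∧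
      ∃ j, 1 ≤ j ∧ j ≤ n ∧ x = yk j := by
    intro i
    have hi : i.1 + 1 ∈ Finset.Icc 1 n := Finset.mem_Icc.mpr ⟨by omega, by omega⟩
    have hslt : zL (i.1 + 1) - ε' < zL (i.1 + 1) + ε' := by linarith
    have hFsign : F (zL (i.1 + 1) - ε') * F (zL (i.1 + 1) + ε') < 0 := hβs _ hi
    obtain ⟨x, hx, hx0⟩ := ivt_neg hFc hslt hFsign
    exact ⟨x, hx, (hFzero x).mp hx0⟩
  choose a hamem haj using hA
  choose jd hjd1 hjd2 hjdv using haj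
  have hykinj : Set.InjOn yk ↑(Finset.Icc 1 n) := by
    intro j1 h1 j2 h2 h
    have hz : zJ β j1 = zJ β j2 := by
      have h' : β * (1 - zJ β j1) / 2 = β * (1 - zJ β j2) / 2 := h
      field_simp at h'
      linarith
    rw [Finset.coe_Icc] at h1 h2
    exact hzJβ.1.injOn h1 h2 hz
  set s : Finset ℝ := (Finset.Icc 1 n).image yk with hsdef
  have hscard : s.card = n := by
    rw [hsdef, Finset.card_image_of_injOn hykinj, Nat.card_Icc]; omega
  have hanti : ∀ j1 j2 : ℕ, 1 ≤ j1 → j2 ≤ n → j1 < j2 → yk j2 < yk j1 := by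
    intro j1 j2 h1 h2 h
    have hlt : zJ β j1 < zJ β j2 := hzJβ.1 (Set.mem_Icc.mpr ⟨h1, by omega⟩)
      (Set.mem_Icc.mpr ⟨by omega, h2⟩) h
    show β * (1 - zJ β j2) / 2 < β * (1 - zJ β j1) / 2
    nlinarith [mul_pos hβ0 (sub_pos.mpr hlt)]
  set g : Fin n → ℝ := fun i => yk (n - i.1) with hg
  have hgmono : StrictMono g := by
    intro i j hij
    have hij' : i.1 < j.1 := hij
    show yk (n - i.1) < yk (n - j.1)
    exact hanti (n - j.1) (n - i.1) (by omega) (by omega) (by omega)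
  have hgmem : ∀ i, g i ∈ s := fun i =>
    Finset.mem_image.mpr ⟨n - i.1, Finset.mem_Icc.mpr ⟨by omega, by omega⟩, rfl⟩
  have hamono : StrictMono a := by
    intro i j hij
    have hij' : i.1 < j.1 := hij
    have h1 := (Set.mem_Ioo.mp (hamem i)).2
    have h2 := (Set.mem_Ioo.mp (hamem j)).1
    have hmemi : (i.1 + 1) ∈ Finset.Icc 1 n := Finset.mem_Icc.mpr ⟨by omega, by omega⟩
    have hmemj : (j.1 + 1) ∈ Finset.Icc 1 n := Finset.mem_Icc.mpr ⟨by omega, by omega⟩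
    have h3 : zL (i.1 + 1) < zL (j.1 + 1) := hzL.1 (Set.mem_Icc.mpr ⟨by omega, by omega⟩)
      (Set.mem_Icc.mpr ⟨by omega, by omega⟩) (by omega)
    have h4 := hsep (i.1 + 1) hmemi (j.1 + 1) hmemj (by omega)
    rw [abs_sub_comm, abs_of_pos (sub_pos.mpr h3)] at h4
    linarith
  have hamem' : ∀ i, a i ∈ s := fun i =>
    Finset.mem_image.mpr ⟨jd i, Finset.mem_Icc.mpr ⟨hjd1 i, hjd2 i⟩, (hjdv i).symm⟩
  have hag : a = g := by
    rw [Finset.orderEmbOfFin_unique hscard hamem' hamono,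
      Finset.orderEmbOfFin_unique hscard hgmem hgmono]
  have hi0 : n - k < n := by omega
  have key := hamem ⟨n - k, hi0⟩
  have hval : a ⟨n - k, hi0⟩ = yk k := by
    rw [hag]
    show yk (n - (n - k)) = yk k
    congr 1
    omega
  rw [hval] at key
  have hidx : n - k + 1 = n + 1 - k := by omega
  rw [hidx] at key
  obtain ⟨klo, khi⟩ := Set.mem_Ioo.mp key
  show dist (yk k) (zL (n + 1 - k)) < ε
  rw [Real.dist_eq, abs_sub_lt_iff]
  constructor <;> linarith
end

section
/- Let α > 0, β > −1 and n ≥ 1. Then P_n^{(α,β)}(x) < P_{n+1}^{(α,β)}(x) for every x > 1. -/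
open Finset Filter

set_option maxHeartbeats 1000000

lemma jterm_pos (α β : ℝ) (hα : 0 < α) (hβ : -1 < β) (s m : ℕ) (y z : ℝ)
    (hy : 0 < y) (hz : 0 < z) :
    0 < ((∏ j ∈ Finset.Icc (s + 1) (s + m), (α + (j : ℝ))) / (Nat.factorial m : ℝ)) *
      ((∏ j ∈ Finset.Icc (m + 1) (s + m), (β + (j : ℝ))) / (Nat.factorial s : ℝ)) *
      y ^ s * z ^ m := by
  have h1 : 0 < ∏ j ∈ Finset.Icc (s + 1) (s + m), (α + (j : ℝ)) :=
    Finset.prod_pos fun j hj => by positivity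
  have h2 : 0 < ∏ j ∈ Finset.Icc (m + 1) (s + m), (β + (j : ℝ)) := by
    refine Finset.prod_pos fun j hj => ?_
    have h := (Finset.mem_Icc.mp hj).1
    have : (1 : ℝ) ≤ (j : ℝ) := by exact_mod_cast Nat.one_le_iff_ne_zero.mpr (by omega)
    linarith
  have hf1 : (0:ℝ) < (Nat.factorial m : ℝ) := by exact_mod_cast Nat.factorial_pos m
  have hf2 : (0:ℝ) < (Nat.factorial s : ℝ) := by exact_mod_cast Nat.factorial_pos s
  exact mul_pos (mul_pos (mul_pos (div_pos h1 hf1) (div_pos h2 hf2)) (pow_pos hy s)) (pow_pos hz m)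

lemma jterm_lt (α β : ℝ) (hα : 0 < α) (hβ : -1 < β) (s m : ℕ) (x : ℝ) (hx : 1 < x) :
    ((∏ j ∈ Finset.Icc (s + 1) (s + m), (α + (j : ℝ))) / (Nat.factorial m : ℝ)) *
      ((∏ j ∈ Finset.Icc (m + 1) (s + m), (β + (j : ℝ))) / (Nat.factorial s : ℝ)) *
      ((x - 1) / 2) ^ s * ((x + 1) / 2) ^ m <
    ((∏ j ∈ Finset.Icc (s + 1) (s + m + 1), (α + (j : ℝ))) / (Nat.factorial (m + 1) : ℝ)) *
      ((∏ j ∈ Finset.Icc (m + 2) (s + m + 1), (β + (j : ℝ))) / (Nat.factorial s : ℝ)) *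
      ((x - 1) / 2) ^ s * ((x + 1) / 2) ^ (m + 1) := by
  have hy : (0:ℝ) < (x - 1) / 2 := by linarith
  have hz : (1:ℝ) < (x + 1) / 2 := by linarith
  set y := (x - 1) / 2
  set z := (x + 1) / 2
  set P := ∏ j ∈ Finset.Icc (s + 1) (s + m), (α + (j : ℝ)) with hP
  set Q := ∏ j ∈ Finset.Icc (m + 1) (s + m), (β + (j : ℝ)) with hQ
  set Q2 := ∏ j ∈ Finset.Icc (m + 2) (s + m + 1), (β + (j : ℝ)) with hQ2
  have hPtop : ∏ j ∈ Finset.Icc (s + 1) (s + m + 1), (α + (j : ℝ))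
      = P * (α + ((s + m + 1 : ℕ) : ℝ)) :=
    Finset.prod_Icc_succ_top (by omega) _
  have hQeq : (β + ((m + 1 : ℕ) : ℝ)) * Q2 = Q * (β + ((s + m + 1 : ℕ) : ℝ)) := by
    have e1 : ∏ j ∈ Finset.Icc (m + 1) (s + m + 1), (β + (j : ℝ))
        = Q * (β + ((s + m + 1 : ℕ) : ℝ)) := Finset.prod_Icc_succ_top (by omega) _
    have hle : m + 1 ≤ s + m + 1 := by omega
    have e2 : (β + ((m + 1 : ℕ) : ℝ)) * ∏ j ∈ Finset.Ioc (m + 1) (s + m + 1), (β + (j : ℝ))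
        = ∏ j ∈ Finset.Icc (m + 1) (s + m + 1), (β + (j : ℝ)) :=
      Finset.mul_prod_Ioc_eq_prod_Icc (f := fun j : ℕ => β + (j : ℝ)) hle
    rw [← e1, ← e2, hQ2, ← Finset.Icc_add_one_left_eq_Ioc]
    rfl
  have hPp : 0 < P :=
    Finset.prod_pos fun j hj => by positivity
  have hQp : 0 < Q := by
    refine Finset.prod_pos fun j hj => ?_
    have h := (Finset.mem_Icc.mp hj).1
    have : (1 : ℝ) ≤ (j : ℝ) := by exact_mod_cast Nat.one_le_iff_ne_zero.mpr (by omega)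
    linarith
  have hT : 0 < P / (Nat.factorial m : ℝ) * (Q / (Nat.factorial s : ℝ)) * y ^ s * z ^ m := by
    have hf1 : (0:ℝ) < (Nat.factorial m : ℝ) := by exact_mod_cast Nat.factorial_pos m
    have hf2 : (0:ℝ) < (Nat.factorial s : ℝ) := by exact_mod_cast Nat.factorial_pos s
    exact mul_pos (mul_pos (mul_pos (div_pos hPp hf1) (div_pos hQp hf2)) (pow_pos hy s))
      (pow_pos (lt_trans one_pos hz) m)
  have hbm : (0:ℝ) < β + ((m + 1 : ℕ) : ℝ) := by push_cast; linarith [Nat.cast_nonneg (α := ℝ) m]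
  have hfm : (0:ℝ) < (Nat.factorial m : ℝ) := by exact_mod_cast Nat.factorial_pos m
  have hfs : (0:ℝ) < (Nat.factorial s : ℝ) := by exact_mod_cast Nat.factorial_pos s
  have hQ2v : Q2 = Q * (β + ((s + m + 1 : ℕ) : ℝ)) / (β + ((m + 1 : ℕ) : ℝ)) := by
    rw [eq_div_iff hbm.ne']
    linarith [hQeq]
  have hfact : (Nat.factorial (m + 1) : ℝ) = ((m : ℝ) + 1) * (Nat.factorial m : ℝ) := by
    rw [Nat.factorial_succ]; push_cast; ring
  have key : P * (α + ((s + m + 1 : ℕ) : ℝ)) / (Nat.factorial (m + 1) : ℝ) *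
      (Q2 / (Nat.factorial s : ℝ)) * y ^ s * z ^ (m + 1)
      = (P / (Nat.factorial m : ℝ) * (Q / (Nat.factorial s : ℝ)) * y ^ s * z ^ m) *
        ((α + ((s + m + 1 : ℕ) : ℝ)) * (β + ((s + m + 1 : ℕ) : ℝ)) * z /
          (((m : ℝ) + 1) * (β + ((m + 1 : ℕ) : ℝ)))) := by
    rw [hQ2v, hfact]
    field_simp
    ring
  rw [hPtop, key]
  refine (lt_mul_iff_one_lt_right hT).mpr ?_
  rw [lt_div_iff₀ (by positivity)]
  have hcs : (0:ℝ) ≤ (s : ℝ) := Nat.cast_nonneg s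
  have hcm : (0:ℝ) ≤ (m : ℝ) := Nat.cast_nonneg m
  push_cast
  have hB : (0:ℝ) < β + (s:ℝ) + m + 1 := by linarith
  have h1 : ((m:ℝ) + 1) * (β + ((m:ℝ) + 1)) ≤ ((m:ℝ) + 1) * (β + (s:ℝ) + m + 1) := by
    have := mul_nonneg (show (0:ℝ) ≤ (m:ℝ) + 1 by linarith) hcs
    nlinarith
  have h2 : ((m:ℝ) + 1) * (β + (s:ℝ) + m + 1) < (α + (s:ℝ) + m + 1) * (β + (s:ℝ) + m + 1) := by
    have := mul_pos (show (0:ℝ) < α + (s:ℝ) by linarith) hB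
    nlinarith
  have hA : (0:ℝ) < α + (s:ℝ) + m + 1 := by linarith
  have h3 : (α + (s:ℝ) + m + 1) * (β + (s:ℝ) + m + 1) < (α + (s:ℝ) + m + 1) * (β + (s:ℝ) + m + 1) * z := by
    have := mul_pos (mul_pos hA hB) (sub_pos.mpr hz)
    nlinarith
  linarith

/-- For `α > 0`, `β > -1` and `n ≥ 1`, we have
`P_n^{(α,β)}(x) < P_{n+1}^{(α,β)}(x)` for every `x > 1`. -/
theorem jacobiP_lt_jacobiP_succ
    (α β : ℝ) (hα : 0 < α) (hβ : -1 < β) (n : ℕ) (hn : 1 ≤ n)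
    (x : ℝ) (hx : 1 < x) :
    jacobiP α β n x < jacobiP α β (n + 1) x := by
  have hy : (0:ℝ) < (x - 1) / 2 := by linarith
  have hz : (0:ℝ) < (x + 1) / 2 := by linarith
  unfold jacobiP
  rw [Finset.sum_range_succ
    (f := fun s => ((∏ j ∈ Finset.Icc (s + 1) (n + 1), (α + (j : ℝ))) /
        (Nat.factorial (n + 1 - s) : ℝ)) *
      ((∏ j ∈ Finset.Icc (n + 1 - s + 1) (n + 1), (β + (j : ℝ))) / (Nat.factorial s : ℝ)) *
      ((x - 1) / 2) ^ s * ((x + 1) / 2) ^ (n + 1 - s))]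
  have hlast : 0 < ((∏ j ∈ Finset.Icc (n + 1 + 1) (n + 1), (α + (j : ℝ))) /
        (Nat.factorial (n + 1 - (n + 1)) : ℝ)) *
      ((∏ j ∈ Finset.Icc (n + 1 - (n + 1) + 1) (n + 1), (β + (j : ℝ))) /
        (Nat.factorial (n + 1) : ℝ)) *
      ((x - 1) / 2) ^ (n + 1) * ((x + 1) / 2) ^ (n + 1 - (n + 1)) := by
    have := jterm_pos α β hα hβ (n + 1) 0 ((x - 1) / 2) ((x + 1) / 2) hy hz
    simpa using this
  have hsum : ∑ s ∈ Finset.range (n + 1),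
      ((∏ j ∈ Finset.Icc (s + 1) n, (α + (j : ℝ))) / (Nat.factorial (n - s) : ℝ)) *
        ((∏ j ∈ Finset.Icc (n - s + 1) n, (β + (j : ℝ))) / (Nat.factorial s : ℝ)) *
        ((x - 1) / 2) ^ s * ((x + 1) / 2) ^ (n - s) <
      ∑ s ∈ Finset.range (n + 1),
      ((∏ j ∈ Finset.Icc (s + 1) (n + 1), (α + (j : ℝ))) / (Nat.factorial (n + 1 - s) : ℝ)) *
        ((∏ j ∈ Finset.Icc (n + 1 - s + 1) (n + 1), (β + (j : ℝ))) / (Nat.factorial s : ℝ)) *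
        ((x - 1) / 2) ^ s * ((x + 1) / 2) ^ (n + 1 - s) := by
    refine Finset.sum_lt_sum_of_nonempty ⟨0, Finset.mem_range.mpr (by omega)⟩ ?_
    intro s hs
    have hsle : s ≤ n := by have := Finset.mem_range.mp hs; omega
    obtain ⟨m, rfl⟩ : ∃ m, n = s + m := ⟨n - s, by omega⟩
    simp only [show s + m - s = m from by omega, show s + m + 1 - s = m + 1 from by omega]
    exact jterm_lt α β hα hβ s m x hx
  linarith
end

section
/- Let α > 0, n ≥ 1 and x a fixed real number. Then lim_{β→∞} (2n−2+α+β)·P̂_n^{(α,β)}(1 − 2x/β) = −L̂_n^{(α)}(x). -/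
open Finset Filter

lemma jacobi_tendsto (α x : ℝ) (m : ℕ) :
    Tendsto (fun β : ℝ => jacobiP α β m (1 - 2 * x / β)) atTop
      (nhds (laguerreL α m x)) := by
  unfold jacobiP laguerreL
  refine tendsto_finset_sum _ (fun s hs => ?_)
  have hsm : s ≤ m := Nat.lt_succ_iff.mp (Finset.mem_range.mp hs)
  have hcard : (Finset.Icc (m - s + 1) m).card = s := by
    rw [Nat.card_Icc]; omega
  set C1 : ℝ := (∏ j ∈ Finset.Icc (s + 1) m, (α + (j : ℝ))) / (Nat.factorial (m - s) : ℝ) with hC1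
  have hprod : Tendsto (fun β : ℝ => ∏ j ∈ Finset.Icc (m - s + 1) m, (1 + (j : ℝ) / β))
      atTop (nhds 1) := by
    have h1 : (1 : ℝ) = ∏ j ∈ Finset.Icc (m - s + 1) m, (1 : ℝ) := by simp
    rw [h1]
    refine tendsto_finset_prod _ (fun j _ => ?_)
    have h0 : Tendsto (fun β : ℝ => (j : ℝ) / β) atTop (nhds 0) :=
      tendsto_const_nhds.div_atTop tendsto_id
    simpa using tendsto_const_nhds.add h0
  have hx : Tendsto (fun β : ℝ => 1 - x / β) atTop (nhds 1) := by
    have h0 : Tendsto (fun β : ℝ => x / β) atTop (nhds 0) :=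
      tendsto_const_nhds.div_atTop tendsto_id
    simpa using tendsto_const_nhds.sub h0
  have t1 : Tendsto (fun β : ℝ => (∏ j ∈ Finset.Icc (m - s + 1) m, (1 + (j : ℝ) / β)) /
      (Nat.factorial s : ℝ)) atTop (nhds (1 / (Nat.factorial s : ℝ))) := hprod.div_const _
  have t2 := ((t1.const_mul C1).mul_const ((-x) ^ s)).mul (hx.pow (m - s))
  have hval : ((-1 : ℝ) ^ s / (Nat.factorial s : ℝ) * C1 * x ^ s)
      = C1 * (1 / (Nat.factorial s : ℝ)) * (-x) ^ s * 1 ^ (m - s) := by ring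
  have hclean : Tendsto (fun β : ℝ =>
      C1 * ((∏ j ∈ Finset.Icc (m - s + 1) m, (1 + (j : ℝ) / β)) / (Nat.factorial s : ℝ)) *
        (-x) ^ s * (1 - x / β) ^ (m - s)) atTop
      (nhds ((-1 : ℝ) ^ s / (Nat.factorial s : ℝ) * C1 * x ^ s)) := by
    rw [hval]; exact t2
  refine hclean.congr' ?_
  filter_upwards [eventually_gt_atTop (0 : ℝ)] with β hβ
  have hβ0 : β ≠ 0 := ne_of_gt hβ
  have h1 : ((1 - 2 * x / β - 1) / 2 : ℝ) ^ s = (-x) ^ s * (β⁻¹) ^ s := by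
    rw [← mul_pow]; congr 1; field_simp; ring
  have h2 : ((1 - 2 * x / β + 1) / 2 : ℝ) = 1 - x / β := by field_simp; ring
  have hpc : (β⁻¹ : ℝ) ^ s = ∏ _j ∈ Finset.Icc (m - s + 1) m, (β⁻¹ : ℝ) := by
    rw [Finset.prod_const, hcard]
  have h3 : (∏ j ∈ Finset.Icc (m - s + 1) m, (β + (j : ℝ))) * (β⁻¹) ^ s
      = ∏ j ∈ Finset.Icc (m - s + 1) m, (1 + (j : ℝ) / β) := by
    rw [hpc, ← Finset.prod_mul_distrib]
    exact Finset.prod_congr rfl (fun j _ => by field_simp)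
  rw [h2, h1]
  rw [show ∀ a b c d e : ℝ, a * (b / c) * (d * e) = a * ((b * e) / c) * d from by intros; ring]
  rw [h3]

/-- For `α > 0`, `n ≥ 1` and fixed real `x`,
`lim_{β→∞} (2n-2+α+β)·P̂_n^{(α,β)}(1 - 2x/β) = -L̂_n^{(α)}(x)`. -/
theorem X1jacobi_tendsto_neg_X1laguerre
    (α : ℝ) (hα : 0 < α) (n : ℕ) (hn : 1 ≤ n) (x : ℝ) :
    Filter.Tendsto
      (fun β : ℝ => (2 * (n : ℝ) - 2 + α + β) * X1jacobiP α β n (1 - 2 * x / β))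
      Filter.atTop (nhds (-(X1laguerreL α n x))) := by
  set c : ℝ := 2 * (n : ℝ) - 2 + α with hc
  -- basic limits
  have hβα : Tendsto (fun β : ℝ => β - α) atTop atTop :=
    tendsto_atTop_add_const_right _ _ tendsto_id
  have hinv : Tendsto (fun β : ℝ => (β - α)⁻¹) atTop (nhds 0) :=
    tendsto_inv_atTop_zero.comp hβα
  -- b → 1
  have hb : Tendsto (fun β : ℝ => (β + α) / (β - α)) atTop (nhds 1) := by
    have h := (hinv.const_mul (2 * α)).const_add 1
    rw [mul_zero, add_zero] at h
    refine h.congr' ?_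
    filter_upwards [eventually_gt_atTop α] with β hβ
    have : β - α ≠ 0 := sub_ne_zero.mpr hβ.ne'
    field_simp
    ring
  -- (β + c)/(β - α) → 1
  have hbc : Tendsto (fun β : ℝ => (β + c) / (β - α)) atTop (nhds 1) := by
    have h := (hinv.const_mul (c + α)).const_add 1
    rw [mul_zero, add_zero] at h
    refine h.congr' ?_
    filter_upwards [eventually_gt_atTop α] with β hβ
    have : β - α ≠ 0 := sub_ne_zero.mpr hβ.ne'
    field_simp
    ring
  -- (α + x) - x*α/β → α + x
  have hax : Tendsto (fun β : ℝ => (α + x) - x * α / β) atTop (nhds (α + x)) := by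
    have h0 : Tendsto (fun β : ℝ => x * α / β) atTop (nhds 0) :=
      tendsto_const_nhds.div_atTop tendsto_id
    simpa using tendsto_const_nhds.sub h0
  -- g1 : (c + β) * (-(1/2)) * (y - b) → α + x
  have hg1 : Tendsto (fun β : ℝ => -(1 / 2) * ((c + β) *
      ((1 - 2 * x / β) - (β + α) / (β - α)))) atTop (nhds (α + x)) := by
    have h := ((hbc.mul hax).const_mul (-2 : ℝ)).const_mul (-(1/2) : ℝ)
    have hval : (-(1/2) : ℝ) * (-2 * (1 * (α + x))) = α + x := by ring
    rw [hval] at h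
    refine h.congr' ?_
    filter_upwards [eventually_gt_atTop α, eventually_gt_atTop (0 : ℝ)] with β hβ1 hβ2
    have h1 : β - α ≠ 0 := sub_ne_zero.mpr hβ1.ne'
    have h2 : β ≠ 0 := ne_of_gt hβ2
    field_simp
    ring
  have hP1 : Tendsto (fun β : ℝ => jacobiP α β (n - 1) (1 - 2 * x / β)) atTop
      (nhds (laguerreL α (n - 1) x)) := jacobi_tendsto α x (n - 1)
  have hQ : Tendsto (fun β : ℝ => (if 2 ≤ n then jacobiP α β (n - 2) (1 - 2 * x / β) else 0))
      atTop (nhds (if 2 ≤ n then laguerreL α (n - 2) x else 0)) := by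
    by_cases h2 : 2 ≤ n
    · simpa [h2] using jacobi_tendsto α x (n - 2)
    · simpa [h2] using tendsto_const_nhds (α := ℝ)
  have hmain := ((hg1.mul hP1).add ((hb.mul hP1).sub hQ))
  have hval : (α + x) * laguerreL α (n - 1) x +
      (1 * laguerreL α (n - 1) x - (if 2 ≤ n then laguerreL α (n - 2) x else 0))
      = -(X1laguerreL α n x) := by
    unfold X1laguerreL; ring
  rw [hval] at hmain
  refine hmain.congr' ?_
  filter_upwards [eventually_gt_atTop α, eventually_gt_atTop (0 : ℝ),
    eventually_gt_atTop (-c)] with β hβ1 hβ2 hβ3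
  have hcβ : c + β ≠ 0 := by
    have : 0 < c + β := by linarith
    exact ne_of_gt this
  unfold X1jacobiP
  rw [← hc]
  have hcomm : (2 * (n : ℝ) - 2 + α + β) = c + β := by rw [hc]
  rw [hcomm]
  field_simp
end

section
/- Let α > 0 and n ≥ 1, and define u_n : (0,∞) → ℝ by u_n(x) = e^{−x/2} x^{(α+1)/2} (x+α)^{−1} · L̂_n^{(α)}(x). Then u_n satisfies u_n''(x) + λ_{n,4}(x)·u_n(x) = 0 for all x > 0, where λ_{n,4}(x) = [−x⁴ + 2(2n−1)x³ + (2α² + 4(2n−1)α − 3)x² + 2α((2n−1)α + 3)x + α²(1−α²)] / (4x²(x+α)²). -/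
open Finset Filter

noncomputable def lagC (α : ℝ) (m k : ℕ) : ℝ :=
  (-1 : ℝ) ^ k / (Nat.factorial k : ℝ) *
    ((∏ j ∈ Finset.Icc (k + 1) m, (α + (j : ℝ))) / (Nat.factorial (m - k) : ℝ))

lemma laguerreL_eq (α : ℝ) (m : ℕ) (x : ℝ) :
    laguerreL α m x = ∑ k ∈ Finset.range (m + 1), lagC α m k * x ^ k := rfl

noncomputable def dL (α : ℝ) (m : ℕ) (x : ℝ) : ℝ :=
  ∑ k ∈ Finset.range (m + 1), lagC α m k * ((k : ℝ) * x ^ (k - 1))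

noncomputable def ddL (α : ℝ) (m : ℕ) (x : ℝ) : ℝ :=
  ∑ k ∈ Finset.range (m + 1), lagC α m k * ((k : ℝ) * (((k - 1 : ℕ) : ℝ) * x ^ (k - 1 - 1)))

lemma hasDerivAt_lag (α : ℝ) (m : ℕ) (x : ℝ) :
    HasDerivAt (fun t => laguerreL α m t) (dL α m x) x := by
  simp only [laguerreL_eq, dL]
  apply HasDerivAt.fun_sum
  intro k _
  exact (hasDerivAt_pow k x).const_mul _

lemma hasDerivAt_dL (α : ℝ) (m : ℕ) (x : ℝ) :
    HasDerivAt (fun t => dL α m t) (ddL α m x) x := by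
  simp only [dL, ddL]
  apply HasDerivAt.fun_sum
  intro k _
  exact ((hasDerivAt_pow (k - 1) x).const_mul (k : ℝ)).const_mul _

lemma prod_Icc_bot (a b : ℕ) (h : a ≤ b) (f : ℕ → ℝ) :
    ∏ j ∈ Finset.Icc a b, f j = f a * ∏ j ∈ Finset.Icc (a + 1) b, f j := by
  rw [Finset.Icc_eq_cons_Ioc h, Finset.prod_cons, Finset.Icc_add_one_left_eq_Ioc]

-- key1 : per-coefficient identity for the Laguerre ODE
lemma key1 (α : ℝ) (m k : ℕ) (hk : k < m) :
    ((k : ℝ) + 1) * ((k : ℝ) + 1 + α) * lagC α m (k + 1) + ((m : ℝ) - (k : ℝ)) * lagC α m k = 0 := by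
  unfold lagC
  obtain ⟨j, hj⟩ : ∃ j, m - k = j + 1 := ⟨m - k - 1, by omega⟩
  have h1 : m - (k + 1) = j := by omega
  have h2 : ∏ i ∈ Finset.Icc (k + 1) m, (α + (i : ℝ)) =
      (α + ((k + 1 : ℕ) : ℝ)) * ∏ i ∈ Finset.Icc (k + 2) m, (α + (i : ℝ)) :=
    prod_Icc_bot (k + 1) m (by omega) _
  rw [hj, h1, h2]
  have hm : m = k + j + 1 := by omega
  subst hm
  have fk : (Nat.factorial (k + 1) : ℝ) = ((k : ℝ) + 1) * (Nat.factorial k : ℝ) := by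
    push_cast [Nat.factorial_succ]; ring
  have fj : (Nat.factorial (j + 1) : ℝ) = ((j : ℝ) + 1) * (Nat.factorial j : ℝ) := by
    push_cast [Nat.factorial_succ]; ring
  rw [fk, fj]
  have hk0 : (Nat.factorial k : ℝ) ≠ 0 := Nat.cast_ne_zero.mpr (Nat.factorial_ne_zero k)
  have hj0 : (Nat.factorial j : ℝ) ≠ 0 := Nat.cast_ne_zero.mpr (Nat.factorial_ne_zero j)
  have hk1 : ((k : ℝ) + 1) ≠ 0 := by positivity
  have hj1 : ((j : ℝ) + 1) ≠ 0 := by positivity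
  field_simp
  push_cast
  ring

-- key2 : per-coefficient identity for x L' = m L - (m+α) L_{m-1}
lemma key2 (α : ℝ) (m k : ℕ) (hk : k < m) :
    ((m : ℝ) - (k : ℝ)) * lagC α m k = ((m : ℝ) + α) * lagC α (m - 1) k := by
  unfold lagC
  obtain ⟨j, hj⟩ : ∃ j, m = k + j + 1 := ⟨m - k - 1, by omega⟩
  subst hj
  have h1 : k + j + 1 - 1 = k + j := by omega
  have h2 : k + j + 1 - k = j + 1 := by omega
  have h3 : k + j - k = j := by omega
  have h4 : ∏ i ∈ Finset.Icc (k + 1) (k + j + 1), (α + (i : ℝ)) =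
      (∏ i ∈ Finset.Icc (k + 1) (k + j), (α + (i : ℝ))) * (α + ((k + j + 1 : ℕ) : ℝ)) :=
    Finset.prod_Icc_succ_top (by omega) _
  rw [h1, h2, h3, h4]
  have fj : (Nat.factorial (j + 1) : ℝ) = ((j : ℝ) + 1) * (Nat.factorial j : ℝ) := by
    push_cast [Nat.factorial_succ]; ring
  rw [fj]
  have hk0 : (Nat.factorial k : ℝ) ≠ 0 := Nat.cast_ne_zero.mpr (Nat.factorial_ne_zero k)
  have hj0 : (Nat.factorial j : ℝ) ≠ 0 := Nat.cast_ne_zero.mpr (Nat.factorial_ne_zero j)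
  have hj1 : ((j : ℝ) + 1) ≠ 0 := by positivity
  field_simp
  push_cast
  ring

-- Laguerre ODE: x y'' + (α+1-x) y' + m y = 0
lemma lagODE (α : ℝ) (m : ℕ) (x : ℝ) :
    x * ddL α m x + (α + 1 - x) * dL α m x + (m : ℝ) * laguerreL α m x = 0 := by
  have hA : x * ddL α m x + (α + 1 - x) * dL α m x + (m : ℝ) * laguerreL α m x =
      ∑ k ∈ Finset.range (m + 1),
        (lagC α m k * ((k : ℝ) * ((k : ℝ) + α)) * x ^ (k - 1)
          + ((m : ℝ) - (k : ℝ)) * lagC α m k * x ^ k) := by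
    simp only [laguerreL_eq, dL, ddL, Finset.mul_sum, ← Finset.sum_add_distrib]
    apply Finset.sum_congr rfl
    intro k _
    match k with
    | 0 => simp
    | 1 => simp; ring
    | (j + 2) =>
      have e1 : j + 2 - 1 = j + 1 := rfl
      have e2 : j + 1 - 1 = j := rfl
      rw [e1, e2]
      have : x ^ (j + 1) = x ^ j * x := by ring
      rw [this]
      push_cast
      ring
  rw [hA, Finset.sum_add_distrib]
  rw [Finset.sum_range_succ' (fun k => lagC α m k * ((k : ℝ) * ((k : ℝ) + α)) * x ^ (k - 1)) m]
  rw [Finset.sum_range_succ (fun k => ((m : ℝ) - (k : ℝ)) * lagC α m k * x ^ k) m]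
  simp only [Nat.cast_zero, zero_mul, mul_zero, zero_add, add_zero, sub_self, zero_mul, mul_zero]
  rw [← Finset.sum_add_distrib]
  apply Finset.sum_eq_zero
  intro k hk
  have hk' : k < m := Finset.mem_range.mp hk
  have e1 : k + 1 - 1 = k := rfl
  rw [e1]
  push_cast
  linear_combination x ^ k * key1 α m k hk'

-- recurrence: x L_m' = m L_m - (m+α) L_{m-1}, for m ≥ 1
lemma lagRec (α : ℝ) (m : ℕ) (hm : 1 ≤ m) (x : ℝ) :
    x * dL α m x = (m : ℝ) * laguerreL α m x - ((m : ℝ) + α) * laguerreL α (m - 1) x := by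
  have hL : x * dL α m x = ∑ k ∈ Finset.range (m + 1), (k : ℝ) * lagC α m k * x ^ k := by
    simp only [dL, Finset.mul_sum]
    apply Finset.sum_congr rfl
    intro k _
    match k with
    | 0 => simp
    | (j + 1) =>
      have e1 : j + 1 - 1 = j := rfl
      rw [e1]
      have : x ^ (j + 1) = x ^ j * x := by ring
      rw [this]; push_cast; ring
  have hm1 : m - 1 + 1 = m := by omega
  rw [hL, laguerreL_eq, laguerreL_eq, hm1, Finset.mul_sum, Finset.mul_sum]
  rw [Finset.sum_range_succ, Finset.sum_range_succ]
  have key : ∑ k ∈ Finset.range m, ((m : ℝ) * (lagC α m k * x ^ k) - (k : ℝ) * lagC α m k * x ^ k)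
      = ∑ k ∈ Finset.range m, ((m : ℝ) + α) * (lagC α (m - 1) k * x ^ k) := by
    apply Finset.sum_congr rfl
    intro k hk
    linear_combination x ^ k * key2 α m k (Finset.mem_range.mp hk)
  rw [Finset.sum_sub_distrib] at key
  linarith [key]

-- derivative of the recurrence: dp + x ddp = m dp - (m+α) dq
lemma lagRec' (α : ℝ) (m : ℕ) (hm : 1 ≤ m) (x : ℝ) :
    dL α m x + x * ddL α m x = (m : ℝ) * dL α m x - ((m : ℝ) + α) * dL α (m - 1) x := by
  have hF : HasDerivAt (fun t => t * dL α m t) (dL α m x + x * ddL α m x) x := by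
    simpa using (hasDerivAt_id x).fun_mul (hasDerivAt_dL α m x)
  have hG : HasDerivAt (fun t => (m : ℝ) * laguerreL α m t - ((m : ℝ) + α) * laguerreL α (m - 1) t)
      ((m : ℝ) * dL α m x - ((m : ℝ) + α) * dL α (m - 1) x) x :=
    ((hasDerivAt_lag α m x).const_mul _).sub ((hasDerivAt_lag α (m - 1) x).const_mul _)
  have hfun : (fun t => t * dL α m t) =
      (fun t => (m : ℝ) * laguerreL α m t - ((m : ℝ) + α) * laguerreL α (m - 1) t) := by
    funext t; exact lagRec α m hm t
  exact (hfun ▸ hF).unique hG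


noncomputable def dX (α : ℝ) (n : ℕ) (x : ℝ) : ℝ :=
  -laguerreL α (n - 1) x - (x + α + 1) * dL α (n - 1) x + (if 2 ≤ n then dL α (n - 2) x else 0)

noncomputable def ddX (α : ℝ) (n : ℕ) (x : ℝ) : ℝ :=
  -2 * dL α (n - 1) x - (x + α + 1) * ddL α (n - 1) x + (if 2 ≤ n then ddL α (n - 2) x else 0)

lemma hasDerivAt_X1 (α : ℝ) (n : ℕ) (x : ℝ) :
    HasDerivAt (fun t => X1laguerreL α n t) (dX α n x) x := by
  unfold X1laguerreL dX
  have base : HasDerivAt (fun t : ℝ => -(t + α + 1)) (-1 : ℝ) x := by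
    simpa using (((hasDerivAt_id x).add_const α).add_const 1).fun_neg
  have h1 := base.mul (hasDerivAt_lag α (n - 1) x)
  by_cases h : 2 ≤ n <;> simp only [h, if_true, if_false]
  · have h2 := h1.add (hasDerivAt_lag α (n - 2) x)
    have e : -1 * laguerreL α (n - 1) x + -(x + α + 1) * dL α (n - 1) x + dL α (n - 2) x
        = -laguerreL α (n - 1) x - (x + α + 1) * dL α (n - 1) x + dL α (n - 2) x := by ring
    exact e ▸ h2
  · have h2 := h1.add_const 0
    have e : -1 * laguerreL α (n - 1) x + -(x + α + 1) * dL α (n - 1) x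
        = -laguerreL α (n - 1) x - (x + α + 1) * dL α (n - 1) x + 0 := by ring
    exact e ▸ h2

lemma hasDerivAt_dX (α : ℝ) (n : ℕ) (x : ℝ) :
    HasDerivAt (fun t => dX α n t) (ddX α n x) x := by
  unfold dX ddX
  have base : HasDerivAt (fun t : ℝ => t + α + 1) (1 : ℝ) x := by
    simpa using ((hasDerivAt_id x).add_const α).add_const 1
  have h1 := (hasDerivAt_lag α (n - 1) x).neg.sub (base.mul (hasDerivAt_dL α (n - 1) x))
  by_cases h : 2 ≤ n <;> simp only [h, if_true, if_false]
  · have h2 := h1.add (hasDerivAt_dL α (n - 2) x)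
    have e : -dL α (n - 1) x - (1 * dL α (n - 1) x + (x + α + 1) * ddL α (n - 1) x)
          + ddL α (n - 2) x
        = -2 * dL α (n - 1) x - (x + α + 1) * ddL α (n - 1) x + ddL α (n - 2) x := by ring
    exact e ▸ h2
  · have h2 := h1.add_const 0
    have e : -dL α (n - 1) x - (1 * dL α (n - 1) x + (x + α + 1) * ddL α (n - 1) x)
        = -2 * dL α (n - 1) x - (x + α + 1) * ddL α (n - 1) x + 0 := by ring
    exact e ▸ h2

lemma dL_zero (α : ℝ) (x : ℝ) : dL α 0 x = 0 := by simp [dL]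

lemma ddL_zero (α : ℝ) (x : ℝ) : ddL α 0 x = 0 := by simp [ddL]

-- The X1-Laguerre differential equation
lemma X1ODE (α : ℝ) (hα : 0 < α) (n : ℕ) (hn : 1 ≤ n) (x : ℝ) :
    x * (x + α) * ddX α n x - (x - α) * (x + α + 1) * dX α n x
      + ((n : ℝ) * x + ((n : ℝ) - 2) * α) * X1laguerreL α n x = 0 := by
  rcases eq_or_lt_of_le hn with h1 | h2
  · -- n = 1
    have hn1 : n = 1 := h1.symm
    subst hn1
    norm_num [X1laguerreL, dX, ddX, lag_zero, dL_zero, ddL_zero]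
    ring
  · -- n ≥ 2
    have h2n : 2 ≤ n := h2
    obtain ⟨m, rfl⟩ : ∃ m, n = m + 1 := ⟨n - 1, by omega⟩
    have hm : 1 ≤ m := by omega
    simp only [X1laguerreL, dX, ddX, Nat.add_sub_cancel, h2n, if_true]
    have hmm : m + 1 - 2 = m - 1 := by omega
    rw [hmm]
    have E1 := lagODE α m x
    have E2 := lagODE α (m - 1) x
    have E3 := lagRec α m hm x
    have E4 := lagRec' α m hm x
    have hcast : ((m - 1 : ℕ) : ℝ) = (m : ℝ) - 1 := by
      push_cast [Nat.cast_sub hm]; ring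
    rw [hcast] at E2
    have hna : ((m : ℝ) + α) ≠ 0 := by positivity
    apply mul_left_cancel₀ hna
    rw [mul_zero]
    push_cast
    linear_combination
      (-((m : ℝ) + α) * (x + α) * (x + α + 1) + 2 * x) * E1
      + ((m : ℝ) + α) * (x + α) * E2
      + 2 * x * E3
      - 2 * x * E4


/-- For `α > 0`, `n ≥ 1`, the function
`u_n(x) = e^{-x/2} x^{(α+1)/2} (x+α)⁻¹ L̂_n^{(α)}(x)` satisfies the Sturm–Liouville
equation `u_n'' + λ_{n,4}·u_n = 0` on `(0,∞)`. -/
theorem X1laguerre_sturm_liouville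
    (α : ℝ) (hα : 0 < α) (n : ℕ) (hn : 1 ≤ n) :
    ∀ x : ℝ, 0 < x →
      deriv (deriv (fun t : ℝ =>
          Real.exp (-t / 2) * t ^ ((α + 1) / 2) * (t + α)⁻¹ * X1laguerreL α n t)) x +
        ((-x ^ 4 + 2 * (2 * (n : ℝ) - 1) * x ^ 3 +
              (2 * α ^ 2 + 4 * (2 * (n : ℝ) - 1) * α - 3) * x ^ 2 +
              2 * α * ((2 * (n : ℝ) - 1) * α + 3) * x + α ^ 2 * (1 - α ^ 2)) /
            (4 * x ^ 2 * (x + α) ^ 2)) *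
          (Real.exp (-x / 2) * x ^ ((α + 1) / 2) * (x + α)⁻¹ * X1laguerreL α n x) = 0 := by
  intro x hx
  have hx0 : x ≠ 0 := ne_of_gt hx
  have hxa : (0:ℝ) < x + α := by positivity
  have hxa0 : x + α ≠ 0 := ne_of_gt hxa
  set v : ℝ → ℝ := fun t =>
      (-(1/2) * Real.exp (-t/2)) * t ^ ((α + 1) / 2) * (t+α)⁻¹ * X1laguerreL α n t
      + Real.exp (-t/2) * (((α + 1) / 2) * t ^ ((α + 1) / 2 - 1)) * (t+α)⁻¹ * X1laguerreL α n t
      + Real.exp (-t/2) * t ^ ((α + 1) / 2) * (-1 / (t+α)^2) * X1laguerreL α n t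
      + Real.exp (-t/2) * t ^ ((α + 1) / 2) * (t+α)⁻¹ * dX α n t with hv_def
  -- pieces
  have hE : ∀ t : ℝ, HasDerivAt (fun s : ℝ => Real.exp (-s/2)) (-(1/2) * Real.exp (-t/2)) t := by
    intro t
    have h1 : HasDerivAt (fun s : ℝ => -s/2) (-1/2 : ℝ) t := by
      simpa using ((hasDerivAt_id t).neg.div_const 2)
    have h2 := h1.exp
    have e : Real.exp (-t/2) * (-1/2) = -(1/2) * Real.exp (-t/2) := by ring
    exact e ▸ h2
  have hI : ∀ t : ℝ, t + α ≠ 0 → HasDerivAt (fun s : ℝ => (s+α)⁻¹) (-1 / (t+α)^2) t := by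
    intro t ht
    have := ((hasDerivAt_id t).add_const α).fun_inv ht
    simpa using this
  have hu : ∀ t ∈ Set.Ioi (0:ℝ), HasDerivAt (fun s : ℝ =>
      Real.exp (-s / 2) * s ^ ((α + 1) / 2) * (s + α)⁻¹ * X1laguerreL α n s) (v t) t := by
    intro t ht
    have ht0 : (0:ℝ) < t := ht
    have hta : t + α ≠ 0 := by positivity
    have hR : HasDerivAt (fun s : ℝ => s ^ ((α + 1) / 2))
        (((α + 1) / 2) * t ^ ((α + 1) / 2 - 1)) t :=
      Real.hasDerivAt_rpow_const (Or.inl (ne_of_gt ht0))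
    have h4 := (((hE t).mul hR).mul (hI t hta)).mul (hasDerivAt_X1 α n t)
    have e : (((-(1/2) * Real.exp (-t/2)) * t ^ ((α + 1) / 2)
          + Real.exp (-t/2) * (((α + 1) / 2) * t ^ ((α + 1) / 2 - 1))) * (t+α)⁻¹
          + Real.exp (-t/2) * t ^ ((α + 1) / 2) * (-1 / (t+α)^2)) * X1laguerreL α n t
          + Real.exp (-t/2) * t ^ ((α + 1) / 2) * (t+α)⁻¹ * dX α n t = v t := by
      rw [hv_def]; ring
    exact e ▸ h4
  have hev : deriv (fun t : ℝ =>
      Real.exp (-t / 2) * t ^ ((α + 1) / 2) * (t + α)⁻¹ * X1laguerreL α n t) =ᶠ[nhds x] v := by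
    filter_upwards [isOpen_Ioi.mem_nhds (Set.mem_Ioi.mpr hx)] with t ht using (hu t ht).deriv
  rw [hev.deriv_eq]
  -- derivative of v at x
  have hR : HasDerivAt (fun s : ℝ => s ^ ((α + 1) / 2))
      (((α + 1) / 2) * x ^ ((α + 1) / 2 - 1)) x :=
    Real.hasDerivAt_rpow_const (Or.inl hx0)
  have hR1 : HasDerivAt (fun s : ℝ => s ^ ((α + 1) / 2 - 1))
      (((α + 1) / 2 - 1) * x ^ ((α + 1) / 2 - 1 - 1)) x :=
    Real.hasDerivAt_rpow_const (Or.inl hx0)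
  have hI2 : HasDerivAt (fun s : ℝ => -1 / (s+α)^2) (2 / (x+α)^3) x := by
    have h1 : HasDerivAt (fun s : ℝ => (s+α)^2) (2*(x+α)) x := by
      simpa using ((hasDerivAt_id x).add_const α).fun_pow 2
    have h2 := (h1.fun_inv (pow_ne_zero 2 hxa0)).const_mul (-1 : ℝ)
    have e : (-1 : ℝ) * (-(2*(x+α)) / ((x+α)^2)^2) = 2 / (x+α)^3 := by
      field_simp
    have e2 : (fun s : ℝ => (-1 : ℝ) * ((s+α)^2)⁻¹) = fun s : ℝ => -1 / (s+α)^2 := by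
      funext s; ring
    exact e2 ▸ e ▸ h2
  have hT1 := ((((hE x).const_mul (-(1/2) : ℝ)).fun_mul hR).fun_mul (hI x hxa0)).fun_mul
    (hasDerivAt_X1 α n x)
  have hT2 := ((((hE x).fun_mul (hR1.const_mul ((α + 1) / 2))).fun_mul (hI x hxa0))).fun_mul
    (hasDerivAt_X1 α n x)
  have hT3 := (((hE x).fun_mul hR).fun_mul hI2).fun_mul (hasDerivAt_X1 α n x)
  have hT4 := (((hE x).fun_mul hR).fun_mul (hI x hxa0)).fun_mul (hasDerivAt_dX α n x)
  have hv := ((hT1.fun_add hT2).fun_add hT3).fun_add hT4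
  rw [hv.deriv]
  simp only [Real.rpow_sub_one hx0]
  set E := Real.exp (-x/2) with hE_def
  set A := x ^ ((α + 1) / 2) with hA_def
  have hT := X1ODE α hα n hn x
  have hdd : ddX α n x = ((x - α) * (x + α + 1) * dX α n x
      - ((n : ℝ) * x + ((n : ℝ) - 2) * α) * X1laguerreL α n x) / (x * (x + α)) := by
    field_simp
    linear_combination hT
  rw [hdd]
  field_simp
  ring
end
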